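/- Let n ≥ 4 and let U be a tableau on [3] = {1,2,3} (so U(1) is a word on {2,3}, U(2) is a word on {1,3}, and U(3) is a word on {1,2}). There exists a regular tableau T on [n] with T_{{1,2,3}} = U if and only if: (1) U(1) and U(3) are balanced (as words on the ordered alphabets {2 ≺ 3} and {1 ≺ 2}, respectively); (2) the block sizes of U(1) are a refinement of exp_3(U(2)); and (3) the block sizes of U(3) are a refinement of exp_1(U(2)). -/

import Mathlib

noncomputable section

/-- Two words (over possibly different ordered alphabets) are order equivalent:
same length, and letters in corresponding positions compare the same way. -/
def OrdEquiv {α β : Type*} [LT α] [LT β] (u : List α) (v : List β) : Prop :=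
  ∃ h : u.length = v.length, ∀ s t : Fin u.length,
    (u.get s < u.get t ↔ v.get (Fin.cast h s) < v.get (Fin.cast h t))

/-- A regular sequence on `[n] = {1, …, n}`: a word on `[n]` (with `n ≥ 3`) whose
restrictions to any two 2-element subsets of `[n]` are order equivalent. -/
def IsRegularSeq (n : ℕ) (w : List ℕ) : Prop :=
  3 ≤ n ∧ (∀ x ∈ w, x ∈ Finset.Icc 1 n) ∧
    ∀ X Y : Finset ℕ, X ⊆ Finset.Icc 1 n → Y ⊆ Finset.Icc 1 n → X.card = 2 → Y.card = 2 →
      OrdEquiv (w.filter (· ∈ X)) (w.filter (· ∈ Y))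

/-- Balanced words on the two-letter ordered alphabet `{a ≺ b}`: concatenations of
balanced blocks `a^r b^r` and `b^r a^r` with `r ≥ 1`. -/
inductive BalancedOn {α : Type*} (a b : α) : List α → Prop
  | nil : BalancedOn a b []
  | lo (r : ℕ) (w : List α) (hr : 0 < r) (hw : BalancedOn a b w) :
      BalancedOn a b (List.replicate r a ++ List.replicate r b ++ w)
  | hi (r : ℕ) (w : List α) (hr : 0 < r) (hw : BalancedOn a b w) :
      BalancedOn a b (List.replicate r b ++ List.replicate r a ++ w)

/-- `HasBlockSizes a b w s`: the word `w` factors into balanced blocks on `{a ≺ b}`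
whose sizes are given, in order, by the list `s`. -/
inductive HasBlockSizes {α : Type*} (a b : α) : List α → List ℕ → Prop
  | nil : HasBlockSizes a b [] []
  | lo (r : ℕ) (w : List α) (s : List ℕ) (hr : 0 < r) (hw : HasBlockSizes a b w s) :
      HasBlockSizes a b (List.replicate r a ++ List.replicate r b ++ w) (r :: s)
  | hi (r : ℕ) (w : List α) (s : List ℕ) (hr : 0 < r) (hw : HasBlockSizes a b w s) :
      HasBlockSizes a b (List.replicate r b ++ List.replicate r a ++ w) (r :: s)

/-- The exponent sequence of the letter `u` in a word: the list of lengths of the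
maximal runs of consecutive `u`'s. -/
def expSeq {α : Type*} [DecidableEq α] (u : α) : List α → List ℕ
  | [] => []
  | x :: xs =>
      let s := expSeq u xs
      if x = u then
        match xs with
        | [] => [1]
        | y :: _ => if y = u then (s.headD 0 + 1) :: s.tail else 1 :: s
      else s

/-- `Refines s t`: the sequence `s` is a refinement of `t`, i.e. `s` splits into
consecutive nonempty groups whose sums are the entries of `t`. -/
inductive Refines : List ℕ → List ℕ → Prop
  | nil : Refines [] []
  | cons (g s t : List ℕ) (hg : g ≠ []) (h : Refines s t) :
      Refines (g ++ s) (g.sum :: t)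

/-- `IsOccPos w u i p`: the (1-based) position of the `i`-th occurrence of the letter
`u` in `w` is `p` (that is, `|w(u,i)| = p`). -/
def IsOccPos {α : Type*} [DecidableEq α] (w : List α) (u : α) (i p : ℕ) : Prop :=
  1 ≤ p ∧ p ≤ w.length ∧ w.getD (p - 1) u = u ∧ (w.take p).count u = i

/-- A tableau on the finite set `A ⊂ ℕ`: a family of rows, where the row of `i ∈ A`
is a word on `A \ {i}`, and rows of indices outside `A` are empty. -/
def IsTableau (A : Finset ℕ) (T : ℕ → List ℕ) : Prop :=
  (∀ i ∈ A, ∀ x ∈ T i, x ∈ A ∧ x ≠ i) ∧ ∀ i, i ∉ A → T i = []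

/-- The restriction of a tableau to `X`: keep only the rows indexed by `X` and in each
of them only the letters belonging to `X`. -/
def restrictTab (X : Finset ℕ) (T : ℕ → List ℕ) : ℕ → List ℕ :=
  fun i => if i ∈ X then (T i).filter (· ∈ X) else []

/-- The (1-based) rank of `a` in the finite set `A`. -/
def rankIn (A : Finset ℕ) (a : ℕ) : ℕ := (A.filter (· ≤ a)).card

/-- Order equivalence of a tableau on `X` with a tableau on `Y`: they have the same
normal form after replacing every letter by its rank, rows being matched according to
the increasing enumerations of `X` and `Y`. -/
def TabEquiv (X Y : Finset ℕ) (T U : ℕ → List ℕ) : Prop :=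
  X.card = Y.card ∧ ∀ j < X.card,
    ((T ((Finset.sort X (· ≤ ·)).getD j 0)).map (rankIn X)) =
    ((U ((Finset.sort Y (· ≤ ·)).getD j 0)).map (rankIn Y))

/-- A regular tableau on `A`: `|A| ≥ 4` and all restrictions to 3-element subsets are
order equivalent. -/
def IsRegularTableau (A : Finset ℕ) (T : ℕ → List ℕ) : Prop :=
  IsTableau A T ∧ 4 ≤ A.card ∧
    ∀ X Y : Finset ℕ, X ⊆ A → Y ⊆ A → X.card = 3 → Y.card = 3 →
      TabEquiv X Y (restrictTab X T) (restrictTab Y T)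

/-- A tableau on `A` is pangrammatic if every element of `A` occurs in some row. -/
def Pangrammatic (A : Finset ℕ) (T : ℕ → List ℕ) : Prop :=
  ∀ a ∈ A, ∃ i ∈ A, a ∈ T i

/-! ### Balanced blocks on the four-letter alphabet `a ≺ b ≺ c ≺ d`, encoded as
`0 ≺ 1 ≺ 2 ≺ 3` in `Fin 4`. -/

/-- A (formal) balanced block on the alphabet `{a ≺ b ≺ c ≺ d}`. -/
inductive Blk : Type
  | ab (r : ℕ) | ba (r : ℕ) | cd (r : ℕ) | dc (r : ℕ)
deriving DecidableEq

/-- The size parameter of a block. -/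
def Blk.r : Blk → ℕ
  | .ab r => r | .ba r => r | .cd r => r | .dc r => r

/-- Whether a block is on the letters `{c, d}`. -/
def Blk.isCD : Blk → Prop
  | .cd _ => True | .dc _ => True | _ => False

/-- The word of a block: `a^r b^r`, `b^r a^r`, `c^r d^r` or `d^r c^r`. -/
def Blk.word : Blk → List (Fin 4)
  | .ab r => List.replicate r 0 ++ List.replicate r 1
  | .ba r => List.replicate r 1 ++ List.replicate r 0
  | .cd r => List.replicate r 2 ++ List.replicate r 3
  | .dc r => List.replicate r 3 ++ List.replicate r 2

/-- All blocks in the list have size at least 1. -/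
def GoodList (L : List Blk) : Prop := ∀ b ∈ L, 0 < b.r

/-- The word obtained by concatenating the words of the blocks in `L`. -/
def wordOf (L : List Blk) : List (Fin 4) := (L.map Blk.word).flatten

/-- The language `B*_(ab,cd)` of concatenations of balanced blocks. -/
def InBStar (w : List (Fin 4)) : Prop := ∃ L : List Blk, GoodList L ∧ wordOf L = w

/-- The language `W_(ab,cd)`: words of `B*_(ab,cd)` containing a letter from `{a,b}`
and a letter from `{c,d}`. -/
def InW (w : List (Fin 4)) : Prop :=
  InBStar w ∧ (∃ x ∈ w, x = (0 : Fin 4) ∨ x = (1 : Fin 4)) ∧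
    (∃ x ∈ w, x = (2 : Fin 4) ∨ x = (3 : Fin 4))

/-- The contribution of one block to row `i` of the tableau `T^ω_n = φ_n(ω)`. -/
def phiRow (n i : ℕ) : Blk → List ℕ
  | .ab r => if 1 < i then ((List.range (i - 1)).map fun j => List.replicate r (j + 1)).flatten else []
  | .ba r => if 1 < i then ((List.range (i - 1)).map fun j => List.replicate r (i - 1 - j)).flatten else []
  | .cd r => if i < n then ((List.range (n - i)).map fun j => List.replicate r (i + 1 + j)).flatten else []
  | .dc r => if i < n then ((List.range (n - i)).map fun j => List.replicate r (n - j)).flatten else []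

/-- The tableau `T^ω_n = φ_n(ω)` on `[n]`, for the word `ω` given by the block
decomposition `L`. -/
def phiTab (n : ℕ) (L : List Blk) : ℕ → List ℕ :=
  fun i => if 1 ≤ i ∧ i ≤ n then (L.map (phiRow n i)).flatten else []

/-- A word of `W_(ab,cd)` is well-balanced if it has a prefix in `B*_(ab,cd)` with an
even number of `a`'s and an odd number of `c`'s, and also a prefix in `B*_(ab,cd)`
with an odd number of `a`'s and an even number of `c`'s. -/
def WellBalanced (w : List (Fin 4)) : Prop :=
  (∃ u v : List (Fin 4), w = u ++ v ∧ InBStar u ∧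
      Even (u.count (0 : Fin 4)) ∧ Odd (u.count (2 : Fin 4))) ∧
  (∃ u v : List (Fin 4), w = u ++ v ∧ InBStar u ∧
      Odd (u.count (0 : Fin 4)) ∧ Even (u.count (2 : Fin 4)))

/-! ### Valid matchings -/

/-- In a tableau, `{j, k}` is weakly adjacent when row `j` starts with `k` and
row `k` starts with `j`. -/
def WeaklyAdj (T : ℕ → List ℕ) (j k : ℕ) : Prop :=
  (T j).head? = some k ∧ (T k).head? = some j

/-- Delete the first entries of rows `j` and `k`. -/
def deletePair (T : ℕ → List ℕ) (j k : ℕ) : ℕ → List ℕ :=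
  fun i => if i = j ∨ i = k then (T i).tail else T i

/-- The deterministic matching process: while some row is nonempty, delete the first
entries of the rows of the lexicographically least weakly adjacent pair; `ValidRun T`
holds when the process terminates with all rows empty. -/
inductive ValidRun : (ℕ → List ℕ) → Prop
  | done (T : ℕ → List ℕ) (h : ∀ i, T i = []) : ValidRun T
  | step (T : ℕ → List ℕ) (j k : ℕ) (hjk : j < k) (hadj : WeaklyAdj T j k)
      (hmin : ∀ j' k' : ℕ, j' < k' → WeaklyAdj T j' k' → (j < j' ∨ (j = j' ∧ k ≤ k')))
      (h : ValidRun (deletePair T j k)) : ValidRun T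




namespace RTaux

/-- Two-letter pattern of a word: keep letters `a`,`b`, encode `a ↦ false`, `b ↦ true`. -/
def two (a b : ℕ) (v : List ℕ) : List Bool :=
  v.filterMap fun e => if e = a then some false else if e = b then some true else none

@[simp] lemma two_nil (a b : ℕ) : two a b [] = [] := rfl

lemma two_cons (a b e : ℕ) (v : List ℕ) :
    two a b (e :: v) = if e = a then false :: two a b v
      else if e = b then true :: two a b v else two a b v := by
  simp only [two, List.filterMap_cons]
  by_cases h1 : e = a
  · simp [h1]
  · by_cases h2 : e = b
    · subst h2; simp [h1]
    · simp [h1, h2]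

lemma two_append (a b : ℕ) (u v : List ℕ) :
    two a b (u ++ v) = two a b u ++ two a b v := by
  simp [two, List.filterMap_append]

lemma two_replicate (a b : ℕ) (r : ℕ) (e : ℕ) :
    two a b (List.replicate r e) = if e = a then List.replicate r false
      else if e = b then List.replicate r true else [] := by
  induction r with
  | zero => by_cases h1 : e = a <;> by_cases h2 : e = b <;> simp [h1, h2]
  | succ r ih =>
      rw [List.replicate_succ, two_cons, ih]
      by_cases h1 : e = a
      · simp [h1, List.replicate_succ]
      · by_cases h2 : e = b
        · subst h2; simp [h1, List.replicate_succ]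
        · simp [h1, h2]

lemma count_false_two (a b : ℕ) (v : List ℕ) :
    (two a b v).count false = v.count a := by
  induction v with
  | nil => rfl
  | cons e v ih =>
      rw [two_cons]
      by_cases h1 : e = a <;> by_cases h2 : e = b <;>
        simp_all [List.count_cons, ih]
          <;> omega

lemma count_true_two {a b : ℕ} (hab : a ≠ b) (v : List ℕ) :
    (two a b v).count true = v.count b := by
  induction v with
  | nil => rfl
  | cons e v ih =>
      rw [two_cons]
      by_cases h1 : e = a <;> by_cases h2 : e = b <;>
        simp_all [List.count_cons, ih]
          <;> omega

lemma two_filter {a b : ℕ} (p : ℕ → Bool) (hp : ∀ e, (e = a ∨ e = b) → p e = true)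
    (v : List ℕ) : two a b (v.filter p) = two a b v := by
  induction v with
  | nil => rfl
  | cons e v ih =>
      by_cases hpe : p e
      · rw [List.filter_cons_of_pos hpe, two_cons, two_cons, ih]
      · rw [List.filter_cons_of_neg hpe, two_cons, ih]
        have h1 : ¬ e = a := fun h => hpe (hp e (Or.inl h))
        have h2 : ¬ e = b := fun h => hpe (hp e (Or.inr h))
        simp [h1, h2]

lemma two_not {a b : ℕ} (hab : a ≠ b) (v : List ℕ) :
    two b a v = (two a b v).map not := by
  induction v with
  | nil => rfl
  | cons e v ih =>
      rw [two_cons, two_cons]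
      by_cases h1 : e = a <;> by_cases h2 : e = b <;> simp_all [ih]

lemma two_map_self {a b : ℕ} (hab : a ≠ b) (v : List ℕ) (hv : ∀ e ∈ v, e = a ∨ e = b) :
    two a b v = v.map (fun e => decide (e = b)) := by
  induction v with
  | nil => rfl
  | cons e v ih =>
      have he := hv e (by simp)
      rw [two_cons, List.map_cons, ih (fun x hx => hv x (by simp [hx]))]
      rcases he with h | h
      · subst h; simp [hab, Ne.symm hab]
      · subst h; simp [Ne.symm hab]

/-- replicate-run matching. -/
lemma rep_eq_rep {α : Type*} {x y y' : α} {r j : ℕ} {l l' : List α}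
    (h : List.replicate r x ++ y :: l = List.replicate j x ++ y' :: l')
    (hy : y ≠ x) (hy' : y' ≠ x) : r = j ∧ y = y' ∧ l = l' := by
  induction r generalizing j with
  | zero =>
      cases j with
      | zero => simp_all
      | succ j => simp [List.replicate_succ] at h; exact absurd h.1 hy
  | succ r ih =>
      cases j with
      | zero =>
          simp [List.replicate_succ] at h
          exact absurd h.1.symm hy'
      | succ j =>
          simp only [List.replicate_succ, List.cons_append, List.cons.injEq] at h
          obtain ⟨r', hy, hl⟩ := ih h.2
          exact ⟨by omega, hy, hl⟩

/-- maximal run extraction -/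
lemma run_extract {α : Type*} : ∀ (l : List α) (e : α), l.head? = some e →
    ∃ r t, 0 < r ∧ l = List.replicate r e ++ t ∧ ∀ e', t.head? = some e' → e' ≠ e := by
  intro l
  induction l with
  | nil => intro e h; simp at h
  | cons x xs ih =>
      intro e h
      simp at h; subst h
      by_cases hx : xs.head? = some x
      · obtain ⟨r, t, hr, hxs, ht⟩ := ih x hx
        exact ⟨r + 1, t, by omega, by simp [List.replicate_succ, hxs], ht⟩
      · refine ⟨1, xs, by omega, by simp [List.replicate_succ], ?_⟩
        intro e' he' he
        subst he
        exact hx he'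

end RTaux
namespace RTaux

/-! ### expSeq lemmas -/

lemma expSeq_cons_ne {α : Type*} [DecidableEq α] {u x : α} (hx : x ≠ u) (l : List α) :
    expSeq u (x :: l) = expSeq u l := by
  simp [expSeq, hx]

lemma expSeq_rep_ne {α : Type*} [DecidableEq α] {u x : α} (hx : x ≠ u) (m : ℕ) (l : List α) :
    expSeq u (List.replicate m x ++ l) = expSeq u l := by
  induction m with
  | zero => simp
  | succ m ih => rw [List.replicate_succ, List.cons_append, expSeq_cons_ne hx, ih]

lemma expSeq_single {α : Type*} [DecidableEq α] (u x : α) :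
    expSeq u [x] = if x = u then [1] else [] := by
  by_cases h : x = u <;> simp [expSeq, h]

lemma expSeq_cons_cons_u {α : Type*} [DecidableEq α] (u y : α) (l : List α) :
    expSeq u (u :: y :: l) = if y = u
      then ((expSeq u (y :: l)).headD 0 + 1) :: (expSeq u (y :: l)).tail
      else 1 :: expSeq u (y :: l) := by
  by_cases h : y = u <;> simp [expSeq, h]

lemma expSeq_rep {α : Type*} [DecidableEq α] {u : α} {m : ℕ} (hm : 0 < m) (l : List α)
    (hl : ∀ x, l.head? = some x → x ≠ u) :
    expSeq u (List.replicate m u ++ l) = m :: expSeq u l := by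
  induction m with
  | zero => omega
  | succ m ih =>
      rw [List.replicate_succ, List.cons_append]
      rcases Nat.eq_zero_or_pos m with hm0 | hm0
      · subst hm0
        simp only [List.replicate_zero, List.nil_append]
        cases l with
        | nil => simp [expSeq]
        | cons y l' =>
            have hy : y ≠ u := hl y rfl
            rw [expSeq_cons_cons_u, if_neg hy, expSeq_cons_ne hy]
      · have hstep := ih hm0
        cases m with
        | zero => omega
        | succ m' =>
            rw [List.replicate_succ, List.cons_append] at hstep ⊢
            rw [expSeq_cons_cons_u, if_pos rfl, hstep]
            simp

/-- relabeling: expSeq is invariant under letter maps that are injective at `u`. -/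
lemma expSeq_map {α β : Type*} [DecidableEq α] [DecidableEq β] (f : α → β) (u : α) :
    ∀ (w : List α), (∀ e ∈ w, (f e = f u ↔ e = u)) →
    expSeq (f u) (w.map f) = expSeq u w := by
  intro w
  induction w with
  | nil => intro _; rfl
  | cons x xs ih =>
      intro hw
      have hx : f x = f u ↔ x = u := hw x (by simp)
      have hxs : ∀ e ∈ xs, (f e = f u ↔ e = u) := fun e he => hw e (by simp [he])
      by_cases hxu : x = u
      · subst hxu
        cases xs with
        | nil => simp [expSeq_single, hx]
        | cons y ys =>
            have hy : f y = f x ↔ y = x := hw y (by simp)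
            have ihy := ih hxs
            rw [List.map_cons] at ihy
            rw [List.map_cons, List.map_cons, expSeq_cons_cons_u, expSeq_cons_cons_u, ihy]
            by_cases hyu : y = x
            · rw [if_pos hyu, if_pos (hy.mpr hyu)]
            · rw [if_neg hyu, if_neg (fun h => hyu (hy.mp h))]
      · rw [List.map_cons, expSeq_cons_ne (fun h => hxu (hx.mp h)), expSeq_cons_ne hxu]
        exact ih hxs

lemma expSeq_not (u : Bool) (l : List Bool) :
    expSeq u (l.map not) = expSeq (!u) l := by
  have := expSeq_map not (!u) l (by intro e _; cases e <;> cases u <;> simp)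
  simpa using this

/-! ### HasBlockSizes lemmas -/

lemma hbs_balanced {α : Type*} {a b : α} :
    ∀ {w : List α} {s : List ℕ}, HasBlockSizes a b w s → BalancedOn a b w := by
  intro w s h
  induction h with
  | nil => exact BalancedOn.nil
  | lo r w s hr hw ih => exact BalancedOn.lo r w hr ih
  | hi r w s hr hw ih => exact BalancedOn.hi r w hr ih

lemma hbs_length {α : Type*} {a b : α} :
    ∀ {w : List α} {s : List ℕ}, HasBlockSizes a b w s → w.length = 2 * s.sum := by
  intro w s h
  induction h with
  | nil => simp
  | lo r w s hr hw ih => simp [ih]; omega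
  | hi r w s hr hw ih => simp [ih]; omega

lemma hbs_pos {α : Type*} {a b : α} :
    ∀ {w : List α} {s : List ℕ}, HasBlockSizes a b w s → ∀ r ∈ s, 0 < r := by
  intro w s h
  induction h with
  | nil => simp
  | lo r w s hr hw ih => intro r' hr'; rcases List.mem_cons.mp hr' with h | h
                         · omega
                         · exact ih r' h
  | hi r w s hr hw ih => intro r' hr'; rcases List.mem_cons.mp hr' with h | h
                         · omega
                         · exact ih r' h

lemma hbs_nil_left {α : Type*} {a b : α} {s : List ℕ} (h : HasBlockSizes a b [] s) :
    s = [] := by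
  cases s with
  | nil => rfl
  | cons r s' =>
      exfalso
      have h1 := hbs_length h
      have h2 := hbs_pos h r (by simp)
      simp at h1
      omega

lemma hbs_nil_right {α : Type*} {a b : α} {w : List α} (h : HasBlockSizes a b w []) :
    w = [] := by cases h; rfl

lemma hbs_map {α β : Type*} (f : α → β) {a b : α} :
    ∀ {w : List α} {s : List ℕ}, HasBlockSizes a b w s →
      HasBlockSizes (f a) (f b) (w.map f) s := by
  intro w s h
  induction h with
  | nil => exact HasBlockSizes.nil
  | lo r w s hr hw ih =>
      simpa [List.map_append, List.map_replicate] using HasBlockSizes.lo r _ _ hr ih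
  | hi r w s hr hw ih =>
      simpa [List.map_append, List.map_replicate] using HasBlockSizes.hi r _ _ hr ih

lemma hbs_sum {q : List Bool} {s : List ℕ} (h : HasBlockSizes false true q s) :
    q.count false = s.sum ∧ q.count true = s.sum := by
  induction h with
  | nil => simp
  | lo r w s hr hw ih => simp [List.count_append, List.count_replicate, ih]
  | hi r w s hr hw ih => simp [List.count_append, List.count_replicate, ih]

lemma hbs_append_split {α : Type*} {a b : α} :
    ∀ (s₁ : List ℕ) {s₂ : List ℕ} {w : List α}, HasBlockSizes a b w (s₁ ++ s₂) →
      ∃ w₁ w₂, w = w₁ ++ w₂ ∧ HasBlockSizes a b w₁ s₁ ∧ HasBlockSizes a b w₂ s₂ := by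
  intro s₁
  induction s₁ with
  | nil => intro s₂ w h; exact ⟨[], w, by simp, HasBlockSizes.nil, h⟩
  | cons r s₁ ih =>
      intro s₂ w h
      cases h with
      | lo r w' s hr hw =>
          obtain ⟨w₁, w₂, hw', h1, h2⟩ := ih hw
          exact ⟨List.replicate r a ++ List.replicate r b ++ w₁, w₂, by simp [hw'],
            HasBlockSizes.lo r w₁ s₁ hr h1, h2⟩
      | hi r w' s hr hw =>
          obtain ⟨w₁, w₂, hw', h1, h2⟩ := ih hw
          exact ⟨List.replicate r b ++ List.replicate r a ++ w₁, w₂, by simp [hw'],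
            HasBlockSizes.hi r w₁ s₁ hr h1, h2⟩

/-! ### Refines lemmas -/

lemma refines_nil_right {s : List ℕ} (h : Refines s []) : s = [] := by
  cases h; rfl

lemma refines_cons_inv {s t : List ℕ} {k : ℕ} (h : Refines s (k :: t)) :
    ∃ g s', s = g ++ s' ∧ g ≠ [] ∧ g.sum = k ∧ Refines s' t := by
  cases h with
  | cons g s' t hg h' => exact ⟨g, s', rfl, hg, rfl, h'⟩

end RTaux
namespace RTaux

lemma rep_cons_ne {α : Type*} {x y : α} {r m : ℕ} {l l' : List α}
    (h : List.replicate r x ++ y :: l = List.replicate m x ++ l')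
    (hy : y ≠ x) : m ≤ r := by
  by_contra hlt
  push_neg at hlt
  rw [show m = r + (m - r) from by omega, List.replicate_add, List.append_assoc] at h
  have h' := List.append_cancel_left h
  have : 0 < m - r := by omega
  cases hmr : m - r with
  | zero => omega
  | succ k =>
      rw [hmr, List.replicate_succ] at h'
      simp at h'
      exact hy h'.1

lemma peelA {a b c : ℕ} (hab : a ≠ b) (hac : a ≠ c) (hbc : b ≠ c)
    (v : List ℕ) (hv : ∀ e ∈ v, e = a ∨ e = b ∨ e = c)
    (H1 : two a b v = two a c v) (H2 : two a b v = two b c v)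
    (hhead : v.head? = some a) :
    ∃ r v', 0 < r ∧
      v = List.replicate r a ++ (List.replicate r b ++ (List.replicate r c ++ v')) := by
  have nba : b ≠ a := Ne.symm hab
  have nca : c ≠ a := Ne.symm hac
  have ncb : c ≠ b := Ne.symm hbc
  obtain ⟨r, w, hr, hvw, hw⟩ := run_extract v a hhead
  cases w with
  | nil =>
      exfalso
      rw [hvw] at H2
      simp [two_append, two_replicate, hab, hac, nba, nca] at H2
      omega
  | cons e w1 =>
      have hea : e ≠ a := hw e rfl
      have he : e = a ∨ e = b ∨ e = c := hv e (by simp [hvw])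
      rcases he with he | he | he
      · exact absurd he hea
      · rw [he] at hvw hea hw
        obtain ⟨j, w2, hj, hw2, hw2h⟩ := run_extract (b :: w1) b rfl
        rw [hw2] at hvw
        cases w2 with
        | nil =>
            exfalso
            rw [hvw] at H1
            have := congrArg List.length H1
            simp [two_append, two_replicate, hab, hac, nba, nca, hbc, ncb] at this
            omega
        | cons e2 w3 =>
            have he2b : e2 ≠ b := hw2h e2 rfl
            have he2 : e2 = a ∨ e2 = b ∨ e2 = c := hv e2 (by simp [hvw])
            rcases he2 with he2 | he2 | he2
            · exfalso
              rw [he2] at hvw he2b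
              have g1 : two a b v = List.replicate r false ++
                  (List.replicate j true ++ (false :: two a b w3)) := by
                rw [hvw]; simp [two_append, two_replicate, two_cons, hab, hac, nba, nca, hbc, ncb]
              have g2 : two a c v = List.replicate r false ++ (false :: two a c w3) := by
                rw [hvw]; simp [two_append, two_replicate, two_cons, hab, hac, nba, nca, hbc, ncb]
              rw [g1, g2] at H1
              have H1' := List.append_cancel_left H1
              cases j with
              | zero => omega
              | succ j' =>
                  rw [List.replicate_succ] at H1'
                  simp at H1'
            · exact absurd he2 he2b
            · rw [he2] at hvw he2b
              -- main case : v = a^r ++ b^j ++ c :: w3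
              have f1 : two a b v = List.replicate r false ++
                  (List.replicate j true ++ two a b w3) := by
                rw [hvw]; simp [two_append, two_replicate, two_cons, hab, hac, nba, nca, hbc, ncb]
              have f3 : two b c v = List.replicate j false ++ (true :: two b c w3) := by
                rw [hvw]; simp [two_append, two_replicate, two_cons, hab, hac, nba, nca, hbc, ncb]
              -- j = r
              have hjr : r = j := by
                rw [f1, f3] at H2
                cases j with
                | zero => omega
                | succ j' =>
                    rw [List.replicate_succ, List.cons_append] at H2
                    have h1 := rep_cons_ne H2 (by simp)
                    have h2 := rep_cons_ne H2.symm (by simp)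
                    omega
              rw [← hjr] at hvw
              -- extract c-run
              obtain ⟨k, w4, hk, hw4, hw4h⟩ := run_extract (c :: w3) c rfl
              rw [hw4] at hvw
              have f1' : two a b v = List.replicate r false ++
                  (List.replicate r true ++ two a b w4) := by
                rw [hvw]; simp [two_append, two_replicate, hab, hac, nba, nca, hbc, ncb]
              have f2' : two a c v = List.replicate r false ++
                  (List.replicate k true ++ two a c w4) := by
                rw [hvw]; simp [two_append, two_replicate, hab, hac, nba, nca, hbc, ncb]
              have f3' : two b c v = List.replicate r false ++
                  (List.replicate k true ++ two b c w4) := by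
                rw [hvw]; simp [two_append, two_replicate, hab, hac, nba, nca, hbc, ncb]
              have E1 : List.replicate r true ++ two a b w4
                  = List.replicate k true ++ two a c w4 := by
                rw [f1', f2'] at H1
                exact List.append_cancel_left H1
              have E2 : two a c w4 = two b c w4 := by
                have h := H1.symm.trans H2
                rw [f2', f3'] at h
                exact List.append_cancel_left (List.append_cancel_left h)
              have hkr : r ≤ k := by
                by_contra hlt
                push_neg at hlt
                rw [show r = k + (r - k) from by omega, List.replicate_add,
                  List.append_assoc] at E1
                have hC := (List.append_cancel_left E1).symm
                have hpos : 0 < r - k := by omega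
                cases hmr : r - k with
                | zero => omega
                | succ m =>
                    rw [hmr, List.replicate_succ, List.cons_append] at hC
                    cases w4 with
                    | nil => simp at hC
                    | cons z w5 =>
                        have hz : z = a ∨ z = b ∨ z = c := hv z (by simp [hvw])
                        have hzc : z ≠ c := hw4h z rfl
                        rcases hz with hz | hz | hz
                        · rw [hz, two_cons, if_pos rfl] at hC
                          simp at hC
                        · rw [E2, hz, two_cons, if_pos rfl] at hC
                          simp at hC
                        · exact absurd hz hzc
              refine ⟨r, List.replicate (k - r) c ++ w4, hr, ?_⟩
              have hksplit : List.replicate k c = List.replicate r c ++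
                  List.replicate (k - r) c := by
                rw [← List.replicate_add]; congr 1; omega
              rw [hvw, hksplit]
              simp only [List.append_assoc]
      · exfalso
        rw [he] at hvw
        rw [hvw] at H2
        have g1 : two a b (List.replicate r a ++ c :: w1)
            = List.replicate r false ++ two a b w1 := by
          simp [two_append, two_replicate, two_cons, hab, hac, nba, nca, hbc, ncb]
        have g2 : two b c (List.replicate r a ++ c :: w1) = true :: two b c w1 := by
          simp [two_append, two_replicate, two_cons, hab, hac, nba, nca, hbc, ncb]
        rw [g1, g2] at H2
        cases r with
        | zero => omega
        | succ r' =>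
            rw [List.replicate_succ] at H2
            simp at H2

end RTaux
namespace RTaux

lemma lemA {a b c : ℕ} (hab : a ≠ b) (hac : a ≠ c) (hbc : b ≠ c) :
    ∀ (N : ℕ) (v : List ℕ), v.length ≤ N → (∀ e ∈ v, e = a ∨ e = b ∨ e = c) →
    two a b v = two a c v → two a b v = two b c v →
    ∃ s, HasBlockSizes false true (two a b v) s := by
  have nba : b ≠ a := Ne.symm hab
  have nca : c ≠ a := Ne.symm hac
  have ncb : c ≠ b := Ne.symm hbc
  intro N
  induction N with
  | zero =>
      intro v hlen _ _ _
      have : v = [] := List.length_eq_zero_iff.mp (by omega)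
      exact ⟨[], by rw [this]; exact HasBlockSizes.nil⟩
  | succ N ih =>
      intro v hlen hv H1 H2
      cases hvc : v with
      | nil => exact ⟨[], by simp; exact HasBlockSizes.nil⟩
      | cons e v0 =>
          subst hvc
          have he : e = a ∨ e = b ∨ e = c := hv e (by simp)
          rcases he with he | he | he
          · -- head a : peel an ascending block
            obtain ⟨r, v', hr, hdec⟩ := peelA hab hac hbc (e :: v0) hv H1 H2 (by simp [he])
            have f1 : two a b (e :: v0) = List.replicate r false ++
                (List.replicate r true ++ two a b v') := by
              rw [hdec]; simp [two_append, two_replicate, hab, hac, nba, nca, hbc, ncb]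
            have f2 : two a c (e :: v0) = List.replicate r false ++
                (List.replicate r true ++ two a c v') := by
              rw [hdec]; simp [two_append, two_replicate, hab, hac, nba, nca, hbc, ncb]
            have f3 : two b c (e :: v0) = List.replicate r false ++
                (List.replicate r true ++ two b c v') := by
              rw [hdec]; simp [two_append, two_replicate, hab, hac, nba, nca, hbc, ncb]
            have G1 : two a b v' = two a c v' := by
              rw [f1, f2] at H1
              exact List.append_cancel_left (List.append_cancel_left H1)
            have G2 : two a b v' = two b c v' := by
              rw [f1, f3] at H2
              exact List.append_cancel_left (List.append_cancel_left H2)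
            have hv' : ∀ e' ∈ v', e' = a ∨ e' = b ∨ e' = c := by
              intro e' he'
              exact hv e' (by simp [hdec, he'])
            have hlen' : v'.length ≤ N := by
              have h := congrArg List.length hdec
              simp at h hlen
              omega
            obtain ⟨s', hs'⟩ := ih v' hlen' hv' G1 G2
            exact ⟨r :: s', by
              rw [f1, ← List.append_assoc]
              exact HasBlockSizes.lo r _ s' hr hs'⟩
          · -- head b : impossible
            exfalso
            rw [two_cons, if_neg (by rw [he]; exact nba), if_pos (by rw [he]),
              two_cons, if_pos (by rw [he])] at H2
            simp at H2
          · -- head c : peel a descending block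
            have H1' : two c b (e :: v0) = two c a (e :: v0) := by
              rw [two_not hbc, two_not hac]
              exact congrArg (List.map not) (H1.symm.trans H2).symm
            have H2' : two c b (e :: v0) = two b a (e :: v0) := by
              rw [two_not hbc, two_not hab]
              exact congrArg (List.map not) H2.symm
            obtain ⟨r, v', hr, hdec⟩ := peelA ncb nca nba (e :: v0)
              (fun e' he' => by rcases hv e' he' with h | h | h <;> tauto) H1' H2'
              (by simp [he])
            have f1 : two a b (e :: v0) = List.replicate r true ++
                (List.replicate r false ++ two a b v') := by
              rw [hdec]; simp [two_append, two_replicate, hab, hac, nba, nca, hbc, ncb]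
            have f2 : two a c (e :: v0) = List.replicate r true ++
                (List.replicate r false ++ two a c v') := by
              rw [hdec]; simp [two_append, two_replicate, hab, hac, nba, nca, hbc, ncb]
            have f3 : two b c (e :: v0) = List.replicate r true ++
                (List.replicate r false ++ two b c v') := by
              rw [hdec]; simp [two_append, two_replicate, hab, hac, nba, nca, hbc, ncb]
            have G1 : two a b v' = two a c v' := by
              rw [f1, f2] at H1
              exact List.append_cancel_left (List.append_cancel_left H1)
            have G2 : two a b v' = two b c v' := by
              rw [f1, f3] at H2
              exact List.append_cancel_left (List.append_cancel_left H2)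
            have hv' : ∀ e' ∈ v', e' = a ∨ e' = b ∨ e' = c := by
              intro e' he'
              exact hv e' (by simp [hdec, he'])
            have hlen' : v'.length ≤ N := by
              have h := congrArg List.length hdec
              simp at h hlen
              omega
            obtain ⟨s', hs'⟩ := ih v' hlen' hv' G1 G2
            exact ⟨r :: s', by
              rw [f1, ← List.append_assoc]
              exact HasBlockSizes.hi r _ s' hr hs'⟩

lemma lemA' {a b c : ℕ} (hab : a ≠ b) (hac : a ≠ c) (hbc : b ≠ c)
    (v : List ℕ) (hv : ∀ e ∈ v, e = a ∨ e = b ∨ e = c)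
    (H1 : two a b v = two a c v) (H2 : two a b v = two b c v) :
    ∃ s, HasBlockSizes false true (two a b v) s :=
  lemA hab hac hbc v.length v le_rfl hv H1 H2

end RTaux
namespace RTaux

lemma split_block {x y : Bool} (hxy : x ≠ y) {u w q' : List Bool} {r : ℕ}
    (h : u ++ w = List.replicate r x ++ (List.replicate r y ++ q'))
    (hcnt : u.count x = u.count y) :
    (u = [] ∧ w = List.replicate r x ++ (List.replicate r y ++ q')) ∨
    ∃ u', u = List.replicate r x ++ (List.replicate r y ++ u') ∧ q' = u' ++ w := by
  rcases List.append_eq_append_iff.mp h with ⟨a', ha1, ha2⟩ | ⟨c', hc1, hc2⟩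
  · -- u is a prefix of replicate r x
    have hu : ∃ L, u = List.replicate L x := by
      refine ⟨u.length, List.eq_replicate_of_mem ?_⟩
      intro b hb
      have : b ∈ List.replicate r x := by rw [ha1]; exact List.mem_append_left _ hb
      exact List.eq_of_mem_replicate this
    obtain ⟨L, huL⟩ := hu
    rw [huL] at hcnt
    simp [List.count_replicate, hxy, Ne.symm hxy] at hcnt
    rw [huL, hcnt] at h ⊢
    left
    exact ⟨rfl, by simpa using h⟩
  · rcases List.append_eq_append_iff.mp hc2 with ⟨a', hb1, hb2⟩ | ⟨c'', hd1, hd2⟩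
    · right
      exact ⟨a', by rw [hc1, hb1], hb2⟩
    · -- c' is a prefix of replicate r y
      have hc : ∃ M, c' = List.replicate M y := by
        refine ⟨c'.length, List.eq_replicate_of_mem ?_⟩
        intro b hb
        have : b ∈ List.replicate r y := by rw [hd1]; exact List.mem_append_left _ hb
        exact List.eq_of_mem_replicate this
      obtain ⟨M, hcM⟩ := hc
      rw [hcM] at hc1
      rw [hc1] at hcnt
      simp [List.count_append, List.count_replicate, hxy, Ne.symm hxy] at hcnt
      have hMr : M = r := by omega
      subst hMr
      have hc'' : c'' = [] := by
        have hlen := congrArg List.length hd1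
        rw [hcM] at hlen
        simp at hlen
        first
        | exact hlen
        | exact List.length_eq_zero_iff.mp (by omega)
      rw [hc''] at hd2
      right
      exact ⟨[], by rw [hc1]; simp, by simp [hd2]⟩

lemma hbs_split : ∀ {s : List ℕ} {q₁ q₂ : List Bool},
    HasBlockSizes false true (q₁ ++ q₂) s → q₁.count false = q₁.count true →
    ∃ s₁ s₂, s = s₁ ++ s₂ ∧ HasBlockSizes false true q₁ s₁ ∧
      HasBlockSizes false true q₂ s₂ := by
  intro s
  induction s with
  | nil =>
      intro q₁ q₂ h hcnt
      have h0 := hbs_nil_right h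
      rw [List.append_eq_nil_iff] at h0
      exact ⟨[], [], rfl, by rw [h0.1]; exact HasBlockSizes.nil,
        by rw [h0.2]; exact HasBlockSizes.nil⟩
  | cons r s' ih =>
      intro q₁ q₂ h hcnt
      obtain ⟨q, hq⟩ : ∃ q, q₁ ++ q₂ = q := ⟨_, rfl⟩
      rw [hq] at h
      cases h with
      | lo r w s hr hw =>
          rw [List.append_assoc] at hq
          rcases split_block (by simp) hq hcnt with ⟨h1, h2⟩ | ⟨u', hu', hw'⟩
          · exact ⟨[], r :: s', rfl, by rw [h1]; exact HasBlockSizes.nil,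
              by rw [h2, ← List.append_assoc]; exact HasBlockSizes.lo r w s' hr hw⟩
          · have hcnt' : u'.count false = u'.count true := by
              rw [hu'] at hcnt
              simp [List.count_append, List.count_replicate] at hcnt
              omega
            rw [hw'] at hw
            obtain ⟨s₁, s₂, hs, hh1, hh2⟩ := ih hw hcnt'
            exact ⟨r :: s₁, s₂, by rw [hs]; rfl,
              by rw [hu', ← List.append_assoc]; exact HasBlockSizes.lo r u' s₁ hr hh1, hh2⟩
      | hi r w s hr hw =>
          rw [List.append_assoc] at hq
          rcases split_block (by simp) hq hcnt.symm with ⟨h1, h2⟩ | ⟨u', hu', hw'⟩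
          · exact ⟨[], r :: s', rfl, by rw [h1]; exact HasBlockSizes.nil,
              by rw [h2, ← List.append_assoc]; exact HasBlockSizes.hi r w s' hr hw⟩
          · have hcnt' : u'.count false = u'.count true := by
              rw [hu'] at hcnt
              simp [List.count_append, List.count_replicate] at hcnt
              omega
            rw [hw'] at hw
            obtain ⟨s₁, s₂, hs, hh1, hh2⟩ := ih hw hcnt'
            exact ⟨r :: s₁, s₂, by rw [hs]; rfl,
              by rw [hu', ← List.append_assoc]; exact HasBlockSizes.hi r u' s₁ hr hh1, hh2⟩

end RTaux
namespace RTaux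

lemma bool_count_len (l : List Bool) : l.count false + l.count true = l.length := by
  induction l with
  | nil => simp
  | cons e l ih => cases e <;> simp [List.count_cons] <;> omega

lemma two_pure {x y z : ℕ} (hyx : y ≠ x) (hzx : z ≠ x) (hzy : z ≠ y) :
    ∀ (g : List ℕ), (∀ e ∈ g, e = y ∨ e = z) →
    two x y g = List.replicate (g.count y) true := by
  intro g
  induction g with
  | nil => simp
  | cons e g ih =>
      intro hg
      have he := hg e (by simp)
      have ih' := ih (fun e' he' => hg e' (by simp [he']))
      rcases he with he | he <;> subst he
      · rw [two_cons, if_neg hyx, if_pos rfl, List.count_cons_self, ih']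
        simp [List.replicate_succ]
      · rw [two_cons, if_neg hzx, if_neg hzy, ih', List.count_cons_of_ne hzy]

lemma seg_decomp {x y z : ℕ} : ∀ (v : List ℕ), (∀ e ∈ v, e = x ∨ e = y ∨ e = z) →
    v = [] ∨ (∃ v', v = x :: v') ∨
    ∃ g v₂, g ≠ [] ∧ (∀ e ∈ g, e = y ∨ e = z) ∧ (v₂ = [] ∨ ∃ v₃, v₂ = x :: v₃) ∧
      v = g ++ v₂ := by
  intro v
  induction v with
  | nil => intro _; left; rfl
  | cons e v0 ih =>
      intro hv
      have he := hv e (by simp)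
      rcases he with he | he
      · exact Or.inr (Or.inl ⟨v0, by rw [he]⟩)
      · right; right
        rcases ih (fun e' he' => hv e' (by simp [he'])) with h0 | ⟨v', hv'⟩ | ⟨g, v₂, hg, hgyz, hv₂, hdec⟩
        · exact ⟨[e], [], by simp, by simpa using he, Or.inl rfl, by simp [h0]⟩
        · exact ⟨[e], v0, by simp, by simpa using he, Or.inr ⟨v', hv'⟩, by simp⟩
        · exact ⟨e :: g, v₂, by simp, by
            intro e' he'
            rcases List.mem_cons.mp he' with h | h
            · rw [h]; exact he
            · exact hgyz e' h, hv₂, by simp [hdec]⟩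

lemma lemG {x y z : ℕ} (hxy : x ≠ y) (hxz : x ≠ z) (hyz : y ≠ z) :
    ∀ (N : ℕ) (v : List ℕ) (s : List ℕ), v.length ≤ N →
    (∀ e ∈ v, e = x ∨ e = y ∨ e = z) →
    two x y v = two x z v → HasBlockSizes false true (two y z v) s →
    Refines s (expSeq true (two x y v)) := by
  have hyx : y ≠ x := Ne.symm hxy
  have hzx : z ≠ x := Ne.symm hxz
  have hzy : z ≠ y := Ne.symm hyz
  intro N
  induction N with
  | zero =>
      intro v s hlen _ _ hbs
      have hv0 : v = [] := List.length_eq_zero_iff.mp (by omega)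
      subst hv0
      have hs := hbs_nil_left hbs
      subst hs
      exact Refines.nil
  | succ N ih =>
      intro v s hlen hv H hbs
      rcases seg_decomp v hv with h0 | ⟨v', hv'⟩ | ⟨g, v₂, hgne, hgyz, hv₂, hdec⟩
      · subst h0
        have hs := hbs_nil_left hbs
        subst hs
        exact Refines.nil
      · -- v = x :: v'
        subst hv'
        rw [two_cons, if_pos rfl] at H ⊢
        rw [two_cons, if_pos rfl] at H
        rw [two_cons, if_neg hxy, if_neg hxz] at hbs
        have H' : two x y v' = two x z v' := by
          injection H
        rw [expSeq_cons_ne (by simp)]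
        exact ih v' s (by simp at hlen; omega)
          (fun e he => hv e (by simp [he])) H' hbs
      · -- v = g ++ v₂ with g a nonempty {y,z}-segment
        subst hdec
        have hmy : two x y (g ++ v₂) = List.replicate (g.count y) true ++ two x y v₂ := by
          rw [two_append, two_pure hyx hzx hzy g hgyz]
        have hmz : two x z (g ++ v₂) = List.replicate (g.count z) true ++ two x z v₂ := by
          rw [two_append, two_pure hzx hyx hzy.symm g
            (fun e he => (hgyz e he).symm)]
        have hq : two y z (g ++ v₂) = two y z g ++ two y z v₂ := two_append _ _ _ _
        have hcfg : (two y z g).count false = g.count y := count_false_two _ _ _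
        have hctg : (two y z g).count true = g.count z := count_true_two hyz _
        rcases hv₂ with hv₂ | ⟨v₃, hv₃⟩
        · -- v₂ = []
          subst hv₂
          simp only [List.append_nil, two_nil] at hmy hmz H hbs hlen hv ⊢
          rw [hmy, hmz] at H
          rw [hmy]
          have hmm : g.count y = g.count z := by
            have := congrArg List.length H
            simpa using this
          have hm1 : 0 < g.count y := by
            cases g with
            | nil => simp at hgne
            | cons e g0 =>
                have he := hgyz e (by simp)
                rcases he with he | he
                · have : y ∈ e :: g0 := by rw [he]; simp
                  have := List.count_pos_iff.mpr this
                  omega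
                · have : z ∈ e :: g0 := by rw [he]; simp
                  have := List.count_pos_iff.mpr this
                  rw [hmm]
                  omega
          have hsum := hbs_sum hbs
          have hsne : s ≠ [] := by
            intro hs0
            subst hs0
            have := hbs_nil_right hbs
            rw [this] at hcfg
            simp at hcfg
            omega
          have hexp : expSeq true (List.replicate (g.count y) true) = [g.count y] := by
            rw [show List.replicate (g.count y) true
                = List.replicate (g.count y) true ++ [] from by simp,
              expSeq_rep hm1 [] (by simp)]
            rfl
          rw [hexp]
          have hrc := Refines.cons s [] [] hsne Refines.nil
          rw [List.append_nil] at hrc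
          have : s.sum = g.count y := by omega
          rwa [this] at hrc
        · -- v₂ = x :: v₃
          subst hv₃
          have f1 : two x y (g ++ x :: v₃) = List.replicate (g.count y) true ++
              (false :: two x y v₃) := by
            rw [hmy, two_cons, if_pos rfl]
          have f2 : two x z (g ++ x :: v₃) = List.replicate (g.count z) true ++
              (false :: two x z v₃) := by
            rw [hmz, two_cons, if_pos rfl]
          rw [f1, f2] at H
          obtain ⟨hmm, _, H'⟩ := rep_eq_rep H (by simp) (by simp)
          have fq : two y z (g ++ x :: v₃) = two y z g ++ two y z v₃ := by
            rw [hq, two_cons, if_neg hxy, if_neg hxz]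
          rw [fq] at hbs
          have hcnt : (two y z g).count false = (two y z g).count true := by
            rw [hcfg, hctg, hmm]
          obtain ⟨s₁, s₂, hs, hh1, hh2⟩ := hbs_split hbs hcnt
          have hsum₁ := hbs_sum hh1
          have hlen₃ : v₃.length ≤ N := by
            have : g.length ≠ 0 := fun h => hgne (List.length_eq_zero_iff.mp h)
            simp at hlen
            omega
          have hrec := ih v₃ s₂ hlen₃ (fun e he => hv e (by simp [he])) H' hh2
          rcases Nat.eq_zero_or_pos (g.count y) with hm | hm
          · -- empty group: no exponent entry
            have hq0 : two y z g = [] := by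
              have hlq := bool_count_len (two y z g)
              rw [hcfg, hctg] at hlq
              exact List.length_eq_zero_iff.mp (by omega)
            rw [hq0] at hh1
            have hs10 := hbs_nil_left hh1
            subst hs10
            rw [f1, hm]
            simp only [List.replicate_zero, List.nil_append]
            rw [expSeq_cons_ne (by simp)]
            rw [hs]
            simpa using hrec
          · rw [f1]
            rw [expSeq_rep hm _ (by simp), expSeq_cons_ne (by simp)]
            have hs1ne : s₁ ≠ [] := by
              intro h0
              subst h0
              simp at hsum₁
              omega
            have hrc := Refines.cons s₁ s₂ (expSeq true (two x y v₃)) hs1ne hrec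
            rw [hs]
            have : s₁.sum = g.count y := by omega
            rwa [this] at hrc

end RTaux
namespace RTaux

lemma two_decode {a b : ℕ} (hab : a ≠ b) : ∀ (w : List ℕ), (∀ e ∈ w, e = a ∨ e = b) →
    (two a b w).map (fun t => cond t b a) = w := by
  intro w
  induction w with
  | nil => intro _; rfl
  | cons e w ih =>
      intro hw
      have ih' := ih (fun e' he' => hw e' (by simp [he']))
      rcases hw e (by simp) with h' | h'
      · rw [two_cons, if_pos h', List.map_cons, ih', h']
        rfl
      · rw [two_cons, if_neg (by rw [h']; exact Ne.symm hab), if_pos h',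
          List.map_cons, ih', h']
        rfl

lemma hbs_decode {a b : ℕ} (hab : a ≠ b) {w : List ℕ} (hw : ∀ e ∈ w, e = a ∨ e = b)
    {s : List ℕ} (h : HasBlockSizes false true (two a b w) s) : HasBlockSizes a b w s := by
  have h2 := hbs_map (fun t => cond t b a) h
  rwa [two_decode hab w hw] at h2

lemma exp_decode_hi {a b : ℕ} (hab : a ≠ b) {w : List ℕ} (hw : ∀ e ∈ w, e = a ∨ e = b) :
    expSeq b w = expSeq true (two a b w) := by
  rw [two_map_self hab w hw]
  have := expSeq_map (fun e => decide (e = b)) b w (by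
    intro e he
    simp)
  simpa using this.symm

lemma exp_decode_lo {a b : ℕ} (hab : a ≠ b) {w : List ℕ} (hw : ∀ e ∈ w, e = a ∨ e = b) :
    expSeq a w = expSeq false (two a b w) := by
  rw [two_map_self hab w hw]
  have := expSeq_map (fun e => decide (e = b)) a w (by
    intro e he
    rcases hw e he with h' | h' <;> subst h' <;> simp [hab, Ne.symm hab])
  rw [← this]
  congr 1
  simp [hab]

lemma conv {w : List ℕ} {X : Finset ℕ} {i a b ra rb : ℕ}
    (hmem : ∀ e, e ∈ X ↔ e = i ∨ e = a ∨ e = b)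
    (hw : ∀ e ∈ w, e ≠ i)
    (hra : rankIn X a = ra) (hrb : rankIn X b = rb) :
    (w.filter (· ∈ X)).map (rankIn X) = (two a b w).map (fun t => cond t rb ra) := by
  induction w with
  | nil => rfl
  | cons e w ih =>
      have hei : e ≠ i := hw e (by simp)
      have ih' := ih (fun e' he' => hw e' (by simp [he']))
      by_cases hea : e = a
      · have heX : e ∈ X := (hmem e).mpr (Or.inr (Or.inl hea))
        rw [List.filter_cons_of_pos (by simpa using heX), List.map_cons, ih',
          two_cons, if_pos hea, List.map_cons]
        congr 1
        rw [hea, hra]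
        rfl
      · by_cases heb : e = b
        · have heX : e ∈ X := (hmem e).mpr (Or.inr (Or.inr heb))
          rw [List.filter_cons_of_pos (by simpa using heX), List.map_cons, ih',
            two_cons, if_neg hea, if_pos heb, List.map_cons]
          congr 1
          rw [heb, hrb]
          rfl
        · have heX : e ∉ X := by
            intro h
            rcases (hmem e).mp h with h' | h' | h' <;> tauto
          rw [List.filter_cons_of_neg (by simpa using heX), two_cons,
            if_neg hea, if_neg heb, ih']

lemma map_cond_inj {ra rb : ℕ} (h : ra ≠ rb) {l₁ l₂ : List Bool}
    (he : l₁.map (fun t => cond t rb ra) = l₂.map (fun t => cond t rb ra)) : l₁ = l₂ := by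
  have hinj : Function.Injective (fun t : Bool => cond t rb ra) := by
    intro s t hst
    cases s <;> cases t <;> simp_all <;> exact absurd hst.symm h
  exact List.map_injective_iff.mpr hinj he

lemma filter_le_eq₁ {x y z : ℕ} (hxy : x < y) (hyz : y < z) :
    ({x, y, z} : Finset ℕ).filter (· ≤ x) = {x} := by
  ext e
  simp only [Finset.mem_filter, Finset.mem_insert, Finset.mem_singleton]
  constructor
  · rintro ⟨h1 | h1 | h1, h2⟩ <;> omega
  · intro h; omega

lemma filter_le_eq₂ {x y z : ℕ} (hxy : x < y) (hyz : y < z) :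
    ({x, y, z} : Finset ℕ).filter (· ≤ y) = {x, y} := by
  ext e
  simp only [Finset.mem_filter, Finset.mem_insert, Finset.mem_singleton]
  constructor
  · rintro ⟨h1 | h1 | h1, h2⟩ <;> omega
  · intro h; rcases h with h | h <;> constructor <;> omega

lemma filter_le_eq₃ {x y z : ℕ} (hxy : x < y) (hyz : y < z) :
    ({x, y, z} : Finset ℕ).filter (· ≤ z) = {x, y, z} := by
  ext e
  simp only [Finset.mem_filter, Finset.mem_insert, Finset.mem_singleton]
  constructor
  · rintro ⟨h1, h2⟩; exact h1
  · intro h; rcases h with h | h | h <;> exact ⟨by tauto, by omega⟩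

lemma card3 {x y z : ℕ} (hxy : x < y) (hyz : y < z) :
    ({x, y, z} : Finset ℕ).card = 3 := by
  rw [Finset.card_insert_of_notMem (by simp; omega),
    Finset.card_insert_of_notMem (by simp; omega), Finset.card_singleton]

lemma rank3 {x y z : ℕ} (hxy : x < y) (hyz : y < z) :
    rankIn {x, y, z} x = 1 ∧ rankIn {x, y, z} y = 2 ∧ rankIn {x, y, z} z = 3 := by
  unfold rankIn
  refine ⟨?_, ?_, ?_⟩
  · rw [filter_le_eq₁ hxy hyz]; simp
  · rw [filter_le_eq₂ hxy hyz]
    rw [Finset.card_insert_of_notMem (by simp; omega), Finset.card_singleton]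
  · rw [filter_le_eq₃ hxy hyz]; exact card3 hxy hyz

lemma sort3 {x y z : ℕ} (hxy : x < y) (hyz : y < z) :
    Finset.sort ({x, y, z} : Finset ℕ) (· ≤ ·) = [x, y, z] := by
  rw [Finset.sort_insert, Finset.sort_insert, Finset.sort_singleton] <;>
    first
      | (constructor <;> omega)
      | (simp; omega)
      | omega
      | (simp; intro e he; rcases he with h | h <;> omega)
      | (intro e he; simp at he; rcases he with h | h <;> omega)

lemma ord3 {X : Finset ℕ} (h : X.card = 3) :
    ∃ x y z, x < y ∧ y < z ∧ X = {x, y, z} := by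
  obtain ⟨a, b, c, hab, hac, hbc, rfl⟩ := Finset.card_eq_three.mp h
  have perm : ∀ (p q r : ℕ), p < q → q < r →
      ({a, b, c} : Finset ℕ) = {p, q, r} →
      ∃ x y z, x < y ∧ y < z ∧ ({a, b, c} : Finset ℕ) = {x, y, z} :=
    fun p q r h1 h2 h3 => ⟨p, q, r, h1, h2, h3⟩
  rcases Nat.lt_trichotomy a b with h1 | h1 | h1
  · rcases Nat.lt_trichotomy b c with h2 | h2 | h2
    · exact ⟨a, b, c, h1, h2, rfl⟩
    · exact absurd h2 hbc
    · rcases Nat.lt_trichotomy a c with h3 | h3 | h3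
      · exact perm a c b h3 h2 (by ext e; simp [Finset.mem_insert]; tauto)
      · exact absurd h3 hac
      · exact perm c a b h3 h1 (by ext e; simp [Finset.mem_insert]; tauto)
  · exact absurd h1 hab
  · rcases Nat.lt_trichotomy a c with h2 | h2 | h2
    · exact perm b a c h1 h2 (by ext e; simp [Finset.mem_insert]; tauto)
    · exact absurd h2 hac
    · rcases Nat.lt_trichotomy b c with h3 | h3 | h3
      · exact perm b c a h3 h2 (by ext e; simp [Finset.mem_insert]; tauto)
      · exact absurd h3 hbc
      · exact perm c b a h3 h1 (by ext e; simp [Finset.mem_insert]; tauto)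

end RTaux
namespace RTaux
set_option maxHeartbeats 1600000

lemma restrict_row₀ {T : ℕ → List ℕ} {x y z : ℕ} (hxy : x < y) (hyz : y < z) :
    restrictTab {x, y, z} T ((Finset.sort ({x, y, z} : Finset ℕ) (· ≤ ·)).getD 0 0)
      = (T x).filter (· ∈ ({x, y, z} : Finset ℕ)) := by
  rw [sort3 hxy hyz]
  simp [restrictTab]

lemma restrict_row₁ {T : ℕ → List ℕ} {x y z : ℕ} (hxy : x < y) (hyz : y < z) :
    restrictTab {x, y, z} T ((Finset.sort ({x, y, z} : Finset ℕ) (· ≤ ·)).getD 1 0)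
      = (T y).filter (· ∈ ({x, y, z} : Finset ℕ)) := by
  rw [sort3 hxy hyz]
  simp [restrictTab]

lemma restrict_row₂ {T : ℕ → List ℕ} {x y z : ℕ} (hxy : x < y) (hyz : y < z) :
    restrictTab {x, y, z} T ((Finset.sort ({x, y, z} : Finset ℕ) (· ≤ ·)).getD 2 0)
      = (T z).filter (· ∈ ({x, y, z} : Finset ℕ)) := by
  rw [sort3 hxy hyz]
  simp [restrictTab]

lemma rows_to_two {w w' : List ℕ} {X Y : Finset ℕ} {i a b i' a' b' ra rb : ℕ}
    (hmemX : ∀ e, e ∈ X ↔ e = i ∨ e = a ∨ e = b)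
    (hmemY : ∀ e, e ∈ Y ↔ e = i' ∨ e = a' ∨ e = b')
    (hwi : ∀ e ∈ w, e ≠ i) (hwi' : ∀ e ∈ w', e ≠ i')
    (hra : rankIn X a = ra) (hrb : rankIn X b = rb)
    (hra' : rankIn Y a' = ra) (hrb' : rankIn Y b' = rb)
    (hrr : ra ≠ rb)
    (heq : (w.filter (· ∈ X)).map (rankIn X) = (w'.filter (· ∈ Y)).map (rankIn Y)) :
    two a b w = two a' b' w' := by
  rw [conv hmemX hwi hra hrb, conv hmemY hwi' hra' hrb'] at heq
  exact map_cond_inj hrr heq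

lemma forward {n : ℕ} (hn : 4 ≤ n) (T U : ℕ → List ℕ)
    (hU : IsTableau ({1, 2, 3} : Finset ℕ) U)
    (hT : IsRegularTableau (Finset.Icc 1 n) T)
    (hres : restrictTab {1, 2, 3} T = U) :
    BalancedOn 2 3 (U 1) ∧ BalancedOn 1 2 (U 3) ∧
    (∃ s, HasBlockSizes 2 3 (U 1) s ∧ Refines s (expSeq 3 (U 2))) ∧
    (∃ s, HasBlockSizes 1 2 (U 3) s ∧ Refines s (expSeq 1 (U 2))) := by
  obtain ⟨⟨hent, _⟩, _, hreg⟩ := hT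
  -- entry facts
  have hrow : ∀ i, 1 ≤ i → i ≤ n → ∀ e ∈ T i, e ≠ i := by
    intro i h1 h2 e he
    exact (hent i (Finset.mem_Icc.mpr ⟨h1, h2⟩) e he).2
  have hni1 : ∀ e ∈ T 1, e ≠ 1 := hrow 1 (by omega) (by omega)
  have hni2 : ∀ e ∈ T 2, e ≠ 2 := hrow 2 (by omega) (by omega)
  have hni3 : ∀ e ∈ T 3, e ≠ 3 := hrow 3 (by omega) (by omega)
  have hni4 : ∀ e ∈ T 4, e ≠ 4 := hrow 4 (by omega) (by omega)
  -- the four 3-subsets of {1,2,3,4}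
  have sub : ∀ x y z : ℕ, 1 ≤ x → x < y → y < z → z ≤ n →
      ({x, y, z} : Finset ℕ) ⊆ Finset.Icc 1 n := by
    intro x y z h1 h2 h3 h4 e he
    simp only [Finset.mem_insert, Finset.mem_singleton] at he
    rw [Finset.mem_Icc]
    rcases he with h | h | h <;> omega
  have te : ∀ X Y : Finset ℕ, X ⊆ Finset.Icc 1 n → Y ⊆ Finset.Icc 1 n →
      X.card = 3 → Y.card = 3 → ∀ j < 3,
      ((restrictTab X T ((Finset.sort X (· ≤ ·)).getD j 0)).map (rankIn X)) =
      ((restrictTab Y T ((Finset.sort Y (· ≤ ·)).getD j 0)).map (rankIn Y)) := by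
    intro X Y hX hY hcX hcY j hj
    exact (hreg X Y hX hY hcX hcY).2 j (by rw [hcX]; exact hj)
  have d123 : (1:ℕ) < 2 ∧ (2:ℕ) < 3 := by omega
  have d124 : (1:ℕ) < 2 ∧ (2:ℕ) < 4 := by omega
  have d134 : (1:ℕ) < 3 ∧ (3:ℕ) < 4 := by omega
  have d234 : (2:ℕ) < 3 ∧ (3:ℕ) < 4 := by omega
  have s123 := sub 1 2 3 (by omega) d123.1 d123.2 (by omega)
  have s124 := sub 1 2 4 (by omega) d124.1 d124.2 (by omega)
  have s134 := sub 1 3 4 (by omega) d134.1 d134.2 (by omega)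
  have s234 := sub 2 3 4 (by omega) d234.1 d234.2 (by omega)
  have c123 := card3 d123.1 d123.2
  have c124 := card3 d124.1 d124.2
  have c134 := card3 d134.1 d134.2
  have c234 := card3 d234.1 d234.2
  have r123 := rank3 d123.1 d123.2
  have r124 := rank3 d124.1 d124.2
  have r134 := rank3 d134.1 d134.2
  have r234 := rank3 d234.1 d234.2
  have m123 : ∀ e : ℕ, e ∈ ({1,2,3} : Finset ℕ) ↔ e = 1 ∨ e = 2 ∨ e = 3 := by
    intro e; simp
  have m124 : ∀ e : ℕ, e ∈ ({1,2,4} : Finset ℕ) ↔ e = 1 ∨ e = 2 ∨ e = 4 := by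
    intro e; simp
  have m134 : ∀ e : ℕ, e ∈ ({1,3,4} : Finset ℕ) ↔ e = 1 ∨ e = 3 ∨ e = 4 := by
    intro e; simp
  have m234 : ∀ e : ℕ, e ∈ ({2,3,4} : Finset ℕ) ↔ e = 2 ∨ e = 3 ∨ e = 4 := by
    intro e; simp
  have m123' : ∀ e : ℕ, e ∈ ({1,2,3} : Finset ℕ) ↔ e = 2 ∨ e = 1 ∨ e = 3 := by
    intro e; simp; tauto
  have m123'' : ∀ e : ℕ, e ∈ ({1,2,3} : Finset ℕ) ↔ e = 3 ∨ e = 1 ∨ e = 2 := by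
    intro e; simp; tauto
  have m124' : ∀ e : ℕ, e ∈ ({1,2,4} : Finset ℕ) ↔ e = 2 ∨ e = 1 ∨ e = 4 := by
    intro e; simp; tauto
  have m124'' : ∀ e : ℕ, e ∈ ({1,2,4} : Finset ℕ) ↔ e = 4 ∨ e = 1 ∨ e = 2 := by
    intro e; simp; tauto
  have m134' : ∀ e : ℕ, e ∈ ({1,3,4} : Finset ℕ) ↔ e = 3 ∨ e = 1 ∨ e = 4 := by
    intro e; simp; tauto
  have m134'' : ∀ e : ℕ, e ∈ ({1,3,4} : Finset ℕ) ↔ e = 4 ∨ e = 1 ∨ e = 3 := by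
    intro e; simp; tauto
  have m234' : ∀ e : ℕ, e ∈ ({2,3,4} : Finset ℕ) ↔ e = 3 ∨ e = 2 ∨ e = 4 := by
    intro e; simp; tauto
  have m234'' : ∀ e : ℕ, e ∈ ({2,3,4} : Finset ℕ) ↔ e = 4 ∨ e = 2 ∨ e = 3 := by
    intro e; simp; tauto
  -- E1 : two 2 3 (T 1) = two 2 4 (T 1)
  have E1 : two 2 3 (T 1) = two 2 4 (T 1) := by
    have h := te ({1,2,3} : Finset ℕ) ({1,2,4} : Finset ℕ) s123 s124 c123 c124 0 (by omega)
    rw [restrict_row₀ d123.1 d123.2, restrict_row₀ d124.1 d124.2] at h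
    exact rows_to_two m123 m124 hni1 hni1 r123.2.1 r123.2.2 r124.2.1 r124.2.2 (by omega) h
  have E2 : two 2 3 (T 1) = two 3 4 (T 1) := by
    have h := te ({1,2,3} : Finset ℕ) ({1,3,4} : Finset ℕ) s123 s134 c123 c134 0 (by omega)
    rw [restrict_row₀ d123.1 d123.2, restrict_row₀ d134.1 d134.2] at h
    exact rows_to_two m123 m134 hni1 hni1 r123.2.1 r123.2.2 r134.2.1 r134.2.2 (by omega) h
  have E3 : two 2 3 (T 1) = two 3 4 (T 2) := by
    have h := te ({1,2,3} : Finset ℕ) ({2,3,4} : Finset ℕ) s123 s234 c123 c234 0 (by omega)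
    rw [restrict_row₀ d123.1 d123.2, restrict_row₀ d234.1 d234.2] at h
    exact rows_to_two m123 m234 hni1 hni2 r123.2.1 r123.2.2 r234.2.1 r234.2.2 (by omega) h
  have E4 : two 1 3 (T 2) = two 1 4 (T 2) := by
    have h := te ({1,2,3} : Finset ℕ) ({1,2,4} : Finset ℕ) s123 s124 c123 c124 1 (by omega)
    rw [restrict_row₁ d123.1 d123.2, restrict_row₁ d124.1 d124.2] at h
    exact rows_to_two m123' m124' hni2 hni2 r123.1 r123.2.2 r124.1 r124.2.2 (by omega) h
  have E5 : two 1 3 (T 2) = two 1 4 (T 3) := by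
    have h := te ({1,2,3} : Finset ℕ) ({1,3,4} : Finset ℕ) s123 s134 c123 c134 1 (by omega)
    rw [restrict_row₁ d123.1 d123.2, restrict_row₁ d134.1 d134.2] at h
    exact rows_to_two m123' m134' hni2 hni3 r123.1 r123.2.2 r134.1 r134.2.2 (by omega) h
  have E6 : two 1 4 (T 3) = two 2 4 (T 3) := by
    have h := te ({1,3,4} : Finset ℕ) ({2,3,4} : Finset ℕ) s134 s234 c134 c234 1 (by omega)
    rw [restrict_row₁ d134.1 d134.2, restrict_row₁ d234.1 d234.2] at h
    exact rows_to_two m134' m234' hni3 hni3 r134.1 r134.2.2 r234.1 r234.2.2 (by omega) h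
  have E7 : two 1 2 (T 3) = two 1 2 (T 4) := by
    have h := te ({1,2,3} : Finset ℕ) ({1,2,4} : Finset ℕ) s123 s124 c123 c124 2 (by omega)
    rw [restrict_row₂ d123.1 d123.2, restrict_row₂ d124.1 d124.2] at h
    exact rows_to_two m123'' m124'' hni3 hni4 r123.1 r123.2.1 r124.1 r124.2.1 (by omega) h
  have E8 : two 1 2 (T 4) = two 1 3 (T 4) := by
    have h := te ({1,2,4} : Finset ℕ) ({1,3,4} : Finset ℕ) s124 s134 c124 c134 2 (by omega)
    rw [restrict_row₂ d124.1 d124.2, restrict_row₂ d134.1 d134.2] at h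
    exact rows_to_two m124'' m134'' hni4 hni4 r124.1 r124.2.1 r134.1 r134.2.1 (by omega) h
  have E9 : two 1 2 (T 4) = two 2 3 (T 4) := by
    have h := te ({1,2,4} : Finset ℕ) ({2,3,4} : Finset ℕ) s124 s234 c124 c234 2 (by omega)
    rw [restrict_row₂ d124.1 d124.2, restrict_row₂ d234.1 d234.2] at h
    exact rows_to_two m124'' m234'' hni4 hni4 r124.1 r124.2.1 r234.1 r234.2.1 (by omega) h
  -- rows of U
  have hU1 : U 1 = (T 1).filter (· ∈ ({1,2,3} : Finset ℕ)) := by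
    rw [← hres]; simp [restrictTab]
  have hU2 : U 2 = (T 2).filter (· ∈ ({1,2,3} : Finset ℕ)) := by
    rw [← hres]; simp [restrictTab]
  have hU3 : U 3 = (T 3).filter (· ∈ ({1,2,3} : Finset ℕ)) := by
    rw [← hres]; simp [restrictTab]
  have hU1e : ∀ e ∈ U 1, e = 2 ∨ e = 3 := by
    intro e he
    have h := hU.1 1 (by simp) e he
    have h2 := (m123 e).mp h.1
    rcases h2 with h2 | h2 | h2 <;> tauto
  have hU2e : ∀ e ∈ U 2, e = 1 ∨ e = 3 := by
    intro e he
    have h := hU.1 2 (by simp) e he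
    have h2 := (m123 e).mp h.1
    rcases h2 with h2 | h2 | h2 <;> tauto
  have hU3e : ∀ e ∈ U 3, e = 1 ∨ e = 2 := by
    intro e he
    have h := hU.1 3 (by simp) e he
    have h2 := (m123 e).mp h.1
    rcases h2 with h2 | h2 | h2 <;> tauto
  -- two of U rows vs T rows
  have tU1 : two 2 3 (U 1) = two 2 3 (T 1) := by
    rw [hU1]
    exact two_filter _ (by rintro e (rfl | rfl) <;> simp) _
  have tU2 : two 1 3 (U 2) = two 1 3 (T 2) := by
    rw [hU2]
    exact two_filter _ (by rintro e (rfl | rfl) <;> simp) _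
  have tU3 : two 1 2 (U 3) = two 1 2 (T 3) := by
    rw [hU3]
    exact two_filter _ (by rintro e (rfl | rfl) <;> simp) _
  -- Lemma A for T 1 restricted to {2,3,4}
  have hsU1 : ∃ s, HasBlockSizes false true (two 2 3 (T 1)) s := by
    set v := (T 1).filter (· ∈ ({2,3,4} : Finset ℕ)) with hv
    have hve : ∀ e ∈ v, e = 2 ∨ e = 3 ∨ e = 4 := by
      intro e he
      rw [hv] at he
      simp only [List.mem_filter] at he
      have := he.2
      simp at this
      exact this
    have tf : ∀ a b : ℕ, (a = 2 ∨ a = 3 ∨ a = 4) → (b = 2 ∨ b = 3 ∨ b = 4) →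
        two a b v = two a b (T 1) := by
      intro a b ha hb
      rw [hv]
      refine two_filter _ ?_ _
      rintro e (rfl | rfl) <;> simp <;> tauto
    obtain ⟨s, hs⟩ := lemA' (show (2:ℕ) ≠ 3 by omega) (show (2:ℕ) ≠ 4 by omega)
      (show (3:ℕ) ≠ 4 by omega) v hve
      (by rw [tf 2 3 (by tauto) (by tauto), tf 2 4 (by tauto) (by tauto)]; exact E1)
      (by rw [tf 2 3 (by tauto) (by tauto), tf 3 4 (by tauto) (by tauto)]; exact E2)
    rw [tf 2 3 (by tauto) (by tauto)] at hs
    exact ⟨s, hs⟩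
  -- Lemma A for T 4 restricted to {1,2,3}
  have hsU3 : ∃ s, HasBlockSizes false true (two 1 2 (T 4)) s := by
    set v := (T 4).filter (· ∈ ({1,2,3} : Finset ℕ)) with hv
    have hve : ∀ e ∈ v, e = 1 ∨ e = 2 ∨ e = 3 := by
      intro e he
      rw [hv] at he
      simp only [List.mem_filter] at he
      have := he.2
      simp at this
      exact this
    have tf : ∀ a b : ℕ, (a = 1 ∨ a = 2 ∨ a = 3) → (b = 1 ∨ b = 2 ∨ b = 3) →
        two a b v = two a b (T 4) := by
      intro a b ha hb
      rw [hv]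
      refine two_filter _ ?_ _
      rintro e (rfl | rfl) <;> simp <;> tauto
    obtain ⟨s, hs⟩ := lemA' (show (1:ℕ) ≠ 2 by omega) (show (1:ℕ) ≠ 3 by omega)
      (show (2:ℕ) ≠ 3 by omega) v hve
      (by rw [tf 1 2 (by tauto) (by tauto), tf 1 3 (by tauto) (by tauto)]; exact E8)
      (by rw [tf 1 2 (by tauto) (by tauto), tf 2 3 (by tauto) (by tauto)]; exact E9)
    rw [tf 1 2 (by tauto) (by tauto)] at hs
    exact ⟨s, hs⟩
  obtain ⟨s, hs⟩ := hsU1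
  obtain ⟨t, ht⟩ := hsU3
  -- refinement for U 1 via Lemma G on T 2 over {1,3,4}
  have ref1 : Refines s (expSeq 3 (U 2)) := by
    set v := (T 2).filter (· ∈ ({1,3,4} : Finset ℕ)) with hv
    have hve : ∀ e ∈ v, e = 1 ∨ e = 3 ∨ e = 4 := by
      intro e he
      rw [hv] at he
      simp only [List.mem_filter] at he
      have := he.2
      simp at this
      exact this
    have tf : ∀ a b : ℕ, (a = 1 ∨ a = 3 ∨ a = 4) → (b = 1 ∨ b = 3 ∨ b = 4) →
        two a b v = two a b (T 2) := by
      intro a b ha hb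
      rw [hv]
      refine two_filter _ ?_ _
      rintro e (rfl | rfl) <;> simp <;> tauto
    have hG := lemG (show (1:ℕ) ≠ 3 by omega) (show (1:ℕ) ≠ 4 by omega)
      (show (3:ℕ) ≠ 4 by omega) v.length v s le_rfl hve
      (by rw [tf 1 3 (by tauto) (by tauto), tf 1 4 (by tauto) (by tauto)]; exact E4)
      (by rw [tf 3 4 (by tauto) (by tauto), ← E3]; exact hs)
    rw [tf 1 3 (by tauto) (by tauto)] at hG
    rw [exp_decode_hi (show (1:ℕ) ≠ 3 by omega) hU2e, tU2]
    exact hG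
  -- refinement for U 3 via Lemma G on T 3 over {4,1,2}
  have ref3 : Refines t (expSeq 1 (U 2)) := by
    set v := (T 3).filter (· ∈ ({1,2,4} : Finset ℕ)) with hv
    have hve : ∀ e ∈ v, e = 4 ∨ e = 1 ∨ e = 2 := by
      intro e he
      rw [hv] at he
      simp only [List.mem_filter] at he
      have := he.2
      simp at this
      tauto
    have tf : ∀ a b : ℕ, (a = 1 ∨ a = 2 ∨ a = 4) → (b = 1 ∨ b = 2 ∨ b = 4) →
        two a b v = two a b (T 3) := by
      intro a b ha hb
      rw [hv]
      refine two_filter _ ?_ _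
      rintro e (rfl | rfl) <;> simp <;> tauto
    have hGmain : two 4 1 v = two 4 2 v := by
      rw [two_not (show (1:ℕ) ≠ 4 by omega), two_not (show (2:ℕ) ≠ 4 by omega),
        tf 1 4 (by tauto) (by tauto), tf 2 4 (by tauto) (by tauto), E6]
    have hG := lemG (show (4:ℕ) ≠ 1 by omega) (show (4:ℕ) ≠ 2 by omega)
      (show (1:ℕ) ≠ 2 by omega) v.length v t le_rfl hve hGmain
      (by rw [tf 1 2 (by tauto) (by tauto), E7]; exact ht)
    rw [two_not (show (1:ℕ) ≠ 4 by omega), tf 1 4 (by tauto) (by tauto),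
      expSeq_not, ← E5] at hG
    rw [exp_decode_lo (show (1:ℕ) ≠ 3 by omega) hU2e, tU2]
    simpa using hG
  -- assemble
  have hbs1 : HasBlockSizes 2 3 (U 1) s :=
    hbs_decode (by omega) hU1e (by rw [tU1]; exact hs)
  have hbs3 : HasBlockSizes 1 2 (U 3) t :=
    hbs_decode (by omega) hU3e (by rw [tU3, E7]; exact ht)
  exact ⟨hbs_balanced hbs1, hbs_balanced hbs3, ⟨s, hbs1, ref1⟩, ⟨t, hbs3, ref3⟩⟩

end RTaux
namespace RTaux

/-- row-1 contribution of a block (letters 2,3 = ranks). -/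
def r1 : Blk → List ℕ
  | .cd r => List.replicate r 2 ++ List.replicate r 3
  | .dc r => List.replicate r 3 ++ List.replicate r 2
  | _ => []

/-- row-2 contribution of a block. -/
def r2 : Blk → List ℕ
  | .ab r => List.replicate r 1
  | .ba r => List.replicate r 1
  | .cd r => List.replicate r 3
  | .dc r => List.replicate r 3

/-- row-3 contribution of a block. -/
def r3 : Blk → List ℕ
  | .ab r => List.replicate r 1 ++ List.replicate r 2
  | .ba r => List.replicate r 2 ++ List.replicate r 1
  | _ => []

def rows (f : Blk → List ℕ) (L : List Blk) : List ℕ := (L.map f).flatten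

@[simp] lemma rows_nil (f : Blk → List ℕ) : rows f [] = [] := rfl

lemma rows_cons (f : Blk → List ℕ) (b : Blk) (L : List Blk) :
    rows f (b :: L) = f b ++ rows f L := by
  simp [rows]

lemma rows_append (f : Blk → List ℕ) (L₁ L₂ : List Blk) :
    rows f (L₁ ++ L₂) = rows f L₁ ++ rows f L₂ := by
  simp [rows]

lemma blk23 : ∀ {w : List ℕ} {g : List ℕ}, HasBlockSizes 2 3 w g →
    ∃ L : List Blk, rows r1 L = w ∧ rows r2 L = List.replicate g.sum 3 ∧
      rows r3 L = [] := by
  intro w g h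
  induction h with
  | nil => exact ⟨[], rfl, rfl, rfl⟩
  | lo r w s hr hw ih =>
      obtain ⟨L, h1, h2, h3⟩ := ih
      refine ⟨Blk.cd r :: L, ?_, ?_, ?_⟩
      · rw [rows_cons, h1]
        first
        | rfl
        | simp [r1]
      · rw [rows_cons, h2, show r2 (Blk.cd r) = List.replicate r 3 from rfl,
          List.sum_cons, List.replicate_add]
      · rw [rows_cons, h3]
        first
        | rfl
        | simp [r3]
  | hi r w s hr hw ih =>
      obtain ⟨L, h1, h2, h3⟩ := ih
      refine ⟨Blk.dc r :: L, ?_, ?_, ?_⟩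
      · rw [rows_cons, h1]
        first
        | rfl
        | simp [r1]
      · rw [rows_cons, h2, show r2 (Blk.dc r) = List.replicate r 3 from rfl,
          List.sum_cons, List.replicate_add]
      · rw [rows_cons, h3]
        first
        | rfl
        | simp [r3]

lemma blk12 : ∀ {w : List ℕ} {g : List ℕ}, HasBlockSizes 1 2 w g →
    ∃ L : List Blk, rows r1 L = [] ∧ rows r2 L = List.replicate g.sum 1 ∧
      rows r3 L = w := by
  intro w g h
  induction h with
  | nil => exact ⟨[], rfl, rfl, rfl⟩
  | lo r w s hr hw ih =>
      obtain ⟨L, h1, h2, h3⟩ := ih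
      refine ⟨Blk.ab r :: L, ?_, ?_, ?_⟩
      · rw [rows_cons, h1]
        first
        | rfl
        | simp [r1]
      · rw [rows_cons, h2, show r2 (Blk.ab r) = List.replicate r 1 from rfl,
          List.sum_cons, List.replicate_add]
      · rw [rows_cons, h3]
        first
        | rfl
        | simp [r3]
  | hi r w s hr hw ih =>
      obtain ⟨L, h1, h2, h3⟩ := ih
      refine ⟨Blk.ba r :: L, ?_, ?_, ?_⟩
      · rw [rows_cons, h1]
        first
        | rfl
        | simp [r1]
      · rw [rows_cons, h2, show r2 (Blk.ba r) = List.replicate r 1 from rfl,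
          List.sum_cons, List.replicate_add]
      · rw [rows_cons, h3]
        first
        | rfl
        | simp [r3]

lemma construct : ∀ (N : ℕ) (u2 u1 u3 s t : List ℕ), u2.length ≤ N →
    (∀ e ∈ u2, e = 1 ∨ e = 3) →
    HasBlockSizes 2 3 u1 s → Refines s (expSeq 3 u2) →
    HasBlockSizes 1 2 u3 t → Refines t (expSeq 1 u2) →
    ∃ L : List Blk, rows r1 L = u1 ∧ rows r2 L = u2 ∧ rows r3 L = u3 := by
  intro N
  induction N with
  | zero =>
      intro u2 u1 u3 s t hlen _ hb1 hr1 hb3 hr3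
      have h0 : u2 = [] := List.length_eq_zero_iff.mp (by omega)
      subst h0
      have hs : s = [] := by
        have := refines_nil_right (by simpa [expSeq] using hr1)
        exact this
      have ht : t = [] := by
        have := refines_nil_right (by simpa [expSeq] using hr3)
        exact this
      subst hs; subst ht
      rw [hbs_nil_right hb1, hbs_nil_right hb3]
      exact ⟨[], rfl, rfl, rfl⟩
  | succ N ih =>
      intro u2 u1 u3 s t hlen hu2 hb1 hr1 hb3 hr3
      cases hu2c : u2 with
      | nil =>
          subst hu2c
          exact ih [] u1 u3 s t (by simp) (by simp) hb1 hr1 hb3 hr3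
      | cons e V0 =>
          subst hu2c
          have he := hu2 e (by simp)
          obtain ⟨k, V, hk, hdec, hVh⟩ := run_extract (e :: V0) e rfl
          have hVe : ∀ e' ∈ V, e' = 1 ∨ e' = 3 := by
            intro e' he'
            exact hu2 e' (by rw [hdec]; exact List.mem_append_right _ he')
          have hlenV : V.length ≤ N := by
            have := congrArg List.length hdec
            simp at this hlen
            omega
          rcases he with he | he
          · -- run of 1's
            rw [he] at hdec hVh
            have hexp1 : expSeq 1 (e :: V0) = k :: expSeq 1 V := by
              rw [he, hdec]
              exact expSeq_rep hk V hVh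
            have hexp3 : expSeq 3 (e :: V0) = expSeq 3 V := by
              rw [he, hdec]
              exact expSeq_rep_ne (by omega) k V
            rw [hexp1] at hr3
            rw [hexp3] at hr1
            obtain ⟨g, t', htg, hgne, hgsum, hrt'⟩ := refines_cons_inv hr3
            subst htg
            obtain ⟨w₁, w₂, hw, hbg, hbt'⟩ := hbs_append_split g hb3
            subst hw
            obtain ⟨L₁, hL1, hL2, hL3⟩ := blk12 hbg
            obtain ⟨L₂, hM1, hM2, hM3⟩ := ih V u1 w₂ s t' hlenV hVe hb1 hr1 hbt' hrt'
            refine ⟨L₁ ++ L₂, ?_, ?_, ?_⟩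
            · rw [rows_append, hL1, hM1]; simp
            · rw [rows_append, hL2, hM2, hgsum, he]
              exact hdec.symm
            · rw [rows_append, hL3, hM3]
          · -- run of 3's
            rw [he] at hdec hVh
            have hexp3 : expSeq 3 (e :: V0) = k :: expSeq 3 V := by
              rw [he, hdec]
              exact expSeq_rep hk V hVh
            have hexp1 : expSeq 1 (e :: V0) = expSeq 1 V := by
              rw [he, hdec]
              exact expSeq_rep_ne (by omega) k V
            rw [hexp3] at hr1
            rw [hexp1] at hr3
            obtain ⟨g, s', hsg, hgne, hgsum, hrs'⟩ := refines_cons_inv hr1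
            subst hsg
            obtain ⟨w₁, w₂, hw, hbg, hbs'⟩ := hbs_append_split g hb1
            subst hw
            obtain ⟨L₁, hL1, hL2, hL3⟩ := blk23 hbg
            obtain ⟨L₂, hM1, hM2, hM3⟩ := ih V w₂ u3 s' t hlenV hVe hbs' hrs' hb3 hr3
            refine ⟨L₁ ++ L₂, ?_, ?_, ?_⟩
            · rw [rows_append, hL1, hM1]
            · rw [rows_append, hL2, hM2, hgsum, he]
              exact hdec.symm
            · rw [rows_append, hL3, hM3]; simp

end RTaux
namespace RTaux

lemma filter_rep (p : ℕ → Bool) (r : ℕ) (v : ℕ) :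
    (List.replicate r v).filter p = if p v then List.replicate r v else [] := by
  induction r with
  | zero => simp
  | succ r ih =>
      rw [List.replicate_succ, List.filter_cons]
      by_cases h : p v <;> simp [h, ih, List.replicate_succ]

lemma flatten_range_zero {m : ℕ} {F : ℕ → List ℕ} (h : ∀ j < m, F j = []) :
    ((List.range m).map F).flatten = [] := by
  induction m with
  | zero => simp
  | succ m ih =>
      rw [List.range_succ, List.map_append, List.flatten_append]
      rw [ih (fun j hj => h j (by omega))]
      simp [h m (by omega)]

lemma flatten_range_one {m j₀ : ℕ} {F : ℕ → List ℕ} (hj : j₀ < m)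
    (h : ∀ j < m, j ≠ j₀ → F j = []) :
    ((List.range m).map F).flatten = F j₀ := by
  induction m with
  | zero => omega
  | succ m ih =>
      rw [List.range_succ, List.map_append, List.flatten_append]
      by_cases hm : j₀ = m
      · rw [flatten_range_zero (fun j hj' => h j (by omega) (by omega))]
        simp [hm]
      · rw [ih (by omega) (fun j hj' hne => h j (by omega) hne)]
        simp [h m (by omega) (fun hh => hm hh.symm)]

lemma flatten_range_two {m j₁ j₂ : ℕ} {F : ℕ → List ℕ} (h12 : j₁ < j₂) (hj : j₂ < m)
    (h : ∀ j < m, j ≠ j₁ → j ≠ j₂ → F j = []) :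
    ((List.range m).map F).flatten = F j₁ ++ F j₂ := by
  induction m with
  | zero => omega
  | succ m ih =>
      rw [List.range_succ, List.map_append, List.flatten_append]
      by_cases hm : j₂ = m
      · rw [flatten_range_one (show j₁ < m by omega)
          (fun j hj' hne => h j (by omega) hne (by omega))]
        simp [hm]
      · rw [ih (by omega) (fun j hj' h1 h2 => h j (by omega) h1 h2)]
        simp [h m (by omega) (fun hh => by omega) (fun hh => hm hh.symm)]

lemma filter_flat_rep (p : ℕ → Bool) (m r : ℕ) (f : ℕ → ℕ) :
    (((List.range m).map fun j => List.replicate r (f j)).flatten).filter p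
      = ((List.range m).map fun j =>
          if p (f j) then List.replicate r (f j) else []).flatten := by
  induction m with
  | zero => simp
  | succ m ih =>
      rw [List.range_succ, List.map_append, List.map_append, List.flatten_append,
        List.flatten_append, List.filter_append, ih]
      congr 1
      simp [filter_rep]

section KK

variable {n x y z : ℕ}

lemma mem_xyz (e : ℕ) : e ∈ ({x, y, z} : Finset ℕ) ↔ e = x ∨ e = y ∨ e = z := by
  simp

lemma block_row_x (hxy : x < y) (hyz : y < z) (hx : 1 ≤ x) (hzn : z ≤ n) (b : Blk) :
    ((phiRow n x b).filter (· ∈ ({x, y, z} : Finset ℕ))).map (rankIn {x, y, z})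
      = r1 b := by
  obtain ⟨q1, q2, q3⟩ := rank3 hxy hyz
  cases b with
  | ab r =>
      show ((if 1 < x then _ else []).filter _).map _ = _
      by_cases h1 : 1 < x
      · rw [if_pos h1, filter_flat_rep]
        rw [flatten_range_zero]
        · rfl
        · intro j hj
          rw [if_neg]
          simp only [decide_eq_true_eq, mem_xyz]
          push_neg
          omega
      · rw [if_neg h1]
        rfl
  | ba r =>
      show ((if 1 < x then _ else []).filter _).map _ = _
      by_cases h1 : 1 < x
      · rw [if_pos h1, filter_flat_rep]
        rw [flatten_range_zero]
        · rfl
        · intro j hj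
          rw [if_neg]
          simp only [decide_eq_true_eq, mem_xyz]
          push_neg
          omega
      · rw [if_neg h1]
        rfl
  | cd r =>
      show ((if x < n then _ else []).filter _).map _ = _
      rw [if_pos (by omega), filter_flat_rep]
      rw [flatten_range_two (show y - x - 1 < z - x - 1 by omega)
        (show z - x - 1 < n - x by omega)]
      · rw [show x + 1 + (y - x - 1) = y from by omega,
          show x + 1 + (z - x - 1) = z from by omega,
          if_pos (by simp), if_pos (by simp)]
        rw [List.map_append, List.map_replicate, List.map_replicate, q2, q3]
        rfl
      · intro j hj h1 h2
        rw [if_neg]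
        simp only [decide_eq_true_eq, mem_xyz]
        push_neg
        omega
  | dc r =>
      show ((if x < n then _ else []).filter _).map _ = _
      rw [if_pos (by omega), filter_flat_rep]
      rw [flatten_range_two (show n - z < n - y by omega)
        (show n - y < n - x by omega)]
      · rw [show n - (n - z) = z from by omega, show n - (n - y) = y from by omega,
          if_pos (by simp), if_pos (by simp)]
        rw [List.map_append, List.map_replicate, List.map_replicate, q2, q3]
        rfl
      · intro j hj h1 h2
        rw [if_neg]
        simp only [decide_eq_true_eq, mem_xyz]
        push_neg
        omega

lemma block_row_y (hxy : x < y) (hyz : y < z) (hx : 1 ≤ x) (hzn : z ≤ n) (b : Blk) :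
    ((phiRow n y b).filter (· ∈ ({x, y, z} : Finset ℕ))).map (rankIn {x, y, z})
      = r2 b := by
  obtain ⟨q1, q2, q3⟩ := rank3 hxy hyz
  cases b with
  | ab r =>
      show ((if 1 < y then _ else []).filter _).map _ = _
      rw [if_pos (by omega), filter_flat_rep]
      rw [flatten_range_one (show x - 1 < y - 1 by omega)]
      · rw [show x - 1 + 1 = x from by omega, if_pos (by simp),
          List.map_replicate, q1]
        rfl
      · intro j hj hne
        rw [if_neg]
        simp only [decide_eq_true_eq, mem_xyz]
        push_neg
        omega
  | ba r =>
      show ((if 1 < y then _ else []).filter _).map _ = _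
      rw [if_pos (by omega), filter_flat_rep]
      rw [flatten_range_one (show y - 1 - x < y - 1 by omega)]
      · rw [show y - 1 - (y - 1 - x) = x from by omega, if_pos (by simp),
          List.map_replicate, q1]
        rfl
      · intro j hj hne
        rw [if_neg]
        simp only [decide_eq_true_eq, mem_xyz]
        push_neg
        omega
  | cd r =>
      show ((if y < n then _ else []).filter _).map _ = _
      rw [if_pos (by omega), filter_flat_rep]
      rw [flatten_range_one (show z - y - 1 < n - y by omega)]
      · rw [show y + 1 + (z - y - 1) = z from by omega, if_pos (by simp),
          List.map_replicate, q3]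
        rfl
      · intro j hj hne
        rw [if_neg]
        simp only [decide_eq_true_eq, mem_xyz]
        push_neg
        omega
  | dc r =>
      show ((if y < n then _ else []).filter _).map _ = _
      rw [if_pos (by omega), filter_flat_rep]
      rw [flatten_range_one (show n - z < n - y by omega)]
      · rw [show n - (n - z) = z from by omega, if_pos (by simp),
          List.map_replicate, q3]
        rfl
      · intro j hj hne
        rw [if_neg]
        simp only [decide_eq_true_eq, mem_xyz]
        push_neg
        omega

lemma block_row_z (hxy : x < y) (hyz : y < z) (hx : 1 ≤ x) (hzn : z ≤ n) (b : Blk) :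
    ((phiRow n z b).filter (· ∈ ({x, y, z} : Finset ℕ))).map (rankIn {x, y, z})
      = r3 b := by
  obtain ⟨q1, q2, q3⟩ := rank3 hxy hyz
  cases b with
  | ab r =>
      show ((if 1 < z then _ else []).filter _).map _ = _
      rw [if_pos (by omega), filter_flat_rep]
      rw [flatten_range_two (show x - 1 < y - 1 by omega) (show y - 1 < z - 1 by omega)]
      · rw [show x - 1 + 1 = x from by omega, show y - 1 + 1 = y from by omega,
          if_pos (by simp), if_pos (by simp)]
        rw [List.map_append, List.map_replicate, List.map_replicate, q1, q2]
        rfl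
      · intro j hj h1 h2
        rw [if_neg]
        simp only [decide_eq_true_eq, mem_xyz]
        push_neg
        omega
  | ba r =>
      show ((if 1 < z then _ else []).filter _).map _ = _
      rw [if_pos (by omega), filter_flat_rep]
      rw [flatten_range_two (show z - 1 - y < z - 1 - x by omega)
        (show z - 1 - x < z - 1 by omega)]
      · rw [show z - 1 - (z - 1 - y) = y from by omega,
          show z - 1 - (z - 1 - x) = x from by omega,
          if_pos (by simp), if_pos (by simp)]
        rw [List.map_append, List.map_replicate, List.map_replicate, q1, q2]
        rfl
      · intro j hj h1 h2
        rw [if_neg]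
        simp only [decide_eq_true_eq, mem_xyz]
        push_neg
        omega
  | cd r =>
      show ((if z < n then _ else []).filter _).map _ = _
      by_cases h1 : z < n
      · rw [if_pos h1, filter_flat_rep]
        rw [flatten_range_zero]
        · rfl
        · intro j hj
          rw [if_neg]
          simp only [decide_eq_true_eq, mem_xyz]
          push_neg
          omega
      · rw [if_neg h1]
        rfl
  | dc r =>
      show ((if z < n then _ else []).filter _).map _ = _
      by_cases h1 : z < n
      · rw [if_pos h1, filter_flat_rep]
        rw [flatten_range_zero]
        · rfl
        · intro j hj
          rw [if_neg]
          simp only [decide_eq_true_eq, mem_xyz]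
          push_neg
          omega
      · rw [if_neg h1]
        rfl

lemma phiTab_row_aux (hxy : x < y) (hyz : y < z) (hx : 1 ≤ x) (hzn : z ≤ n)
    (L : List Blk) :
    ((((L.map (phiRow n x)).flatten).filter (· ∈ ({x, y, z} : Finset ℕ))).map
        (rankIn {x, y, z}) = rows r1 L) ∧
    ((((L.map (phiRow n y)).flatten).filter (· ∈ ({x, y, z} : Finset ℕ))).map
        (rankIn {x, y, z}) = rows r2 L) ∧
    ((((L.map (phiRow n z)).flatten).filter (· ∈ ({x, y, z} : Finset ℕ))).map
        (rankIn {x, y, z}) = rows r3 L) := by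
  induction L with
  | nil => exact ⟨rfl, rfl, rfl⟩
  | cons b L ih =>
      simp only [List.map_cons, List.flatten_cons, List.filter_append, List.map_append]
      exact ⟨by rw [ih.1, block_row_x hxy hyz hx hzn b, rows_cons],
        by rw [ih.2.1, block_row_y hxy hyz hx hzn b, rows_cons],
        by rw [ih.2.2, block_row_z hxy hyz hx hzn b, rows_cons]⟩

lemma phiTab_row (hxy : x < y) (hyz : y < z) (hx : 1 ≤ x) (hzn : z ≤ n) (L : List Blk) :
    (((phiTab n L x).filter (· ∈ ({x, y, z} : Finset ℕ))).map (rankIn {x, y, z})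
        = rows r1 L) ∧
    (((phiTab n L y).filter (· ∈ ({x, y, z} : Finset ℕ))).map (rankIn {x, y, z})
        = rows r2 L) ∧
    (((phiTab n L z).filter (· ∈ ({x, y, z} : Finset ℕ))).map (rankIn {x, y, z})
        = rows r3 L) := by
  have hx' : phiTab n L x = (L.map (phiRow n x)).flatten := by
    rw [phiTab, if_pos (⟨hx, by omega⟩ : 1 ≤ x ∧ x ≤ n)]
  have hy' : phiTab n L y = (L.map (phiRow n y)).flatten := by
    rw [phiTab, if_pos (⟨by omega, by omega⟩ : 1 ≤ y ∧ y ≤ n)]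
  have hz' : phiTab n L z = (L.map (phiRow n z)).flatten := by
    rw [phiTab, if_pos (⟨by omega, by omega⟩ : 1 ≤ z ∧ z ≤ n)]
  rw [hx', hy', hz']
  exact phiTab_row_aux hxy hyz hx hzn L

end KK

end RTaux
namespace RTaux

lemma phiRow_mem {n i : ℕ} (hi1 : 1 ≤ i) (hin : i ≤ n) (b : Blk) (e : ℕ)
    (he : e ∈ phiRow n i b) : 1 ≤ e ∧ e ≤ n ∧ e ≠ i := by
  cases b with
  | ab r =>
      rw [show phiRow n i (Blk.ab r) = if 1 < i then
          ((List.range (i - 1)).map fun j => List.replicate r (j + 1)).flatten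
          else [] from rfl] at he
      split_ifs at he with h1
      · simp only [List.mem_flatten, List.mem_map, List.mem_range] at he
        obtain ⟨l, ⟨j, hj, hl⟩, hel⟩ := he
        rw [← hl] at hel
        have := List.eq_of_mem_replicate hel
        omega
      · simp at he
  | ba r =>
      rw [show phiRow n i (Blk.ba r) = if 1 < i then
          ((List.range (i - 1)).map fun j => List.replicate r (i - 1 - j)).flatten
          else [] from rfl] at he
      split_ifs at he with h1
      · simp only [List.mem_flatten, List.mem_map, List.mem_range] at he
        obtain ⟨l, ⟨j, hj, hl⟩, hel⟩ := he
        rw [← hl] at hel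
        have := List.eq_of_mem_replicate hel
        omega
      · simp at he
  | cd r =>
      rw [show phiRow n i (Blk.cd r) = if i < n then
          ((List.range (n - i)).map fun j => List.replicate r (i + 1 + j)).flatten
          else [] from rfl] at he
      split_ifs at he with h1
      · simp only [List.mem_flatten, List.mem_map, List.mem_range] at he
        obtain ⟨l, ⟨j, hj, hl⟩, hel⟩ := he
        rw [← hl] at hel
        have := List.eq_of_mem_replicate hel
        omega
      · simp at he
  | dc r =>
      rw [show phiRow n i (Blk.dc r) = if i < n then
          ((List.range (n - i)).map fun j => List.replicate r (n - j)).flatten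
          else [] from rfl] at he
      split_ifs at he with h1
      · simp only [List.mem_flatten, List.mem_map, List.mem_range] at he
        obtain ⟨l, ⟨j, hj, hl⟩, hel⟩ := he
        rw [← hl] at hel
        have := List.eq_of_mem_replicate hel
        omega
      · simp at he

lemma phiTab_isTableau {n : ℕ} (L : List Blk) :
    IsTableau (Finset.Icc 1 n) (phiTab n L) := by
  constructor
  · intro i hi e he
    rw [Finset.mem_Icc] at hi
    rw [phiTab, if_pos hi] at he
    simp only [List.mem_flatten, List.mem_map] at he
    obtain ⟨l, ⟨b, _, hb⟩, hel⟩ := he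
    rw [← hb] at hel
    have := phiRow_mem hi.1 hi.2 b e hel
    exact ⟨Finset.mem_Icc.mpr ⟨this.1, this.2.1⟩, this.2.2⟩
  · intro i hi
    rw [Finset.mem_Icc] at hi
    rw [phiTab, if_neg hi]

lemma backward {n : ℕ} (hn : 4 ≤ n) (U : ℕ → List ℕ)
    (hU : IsTableau ({1, 2, 3} : Finset ℕ) U)
    (h1 : ∃ s, HasBlockSizes 2 3 (U 1) s ∧ Refines s (expSeq 3 (U 2)))
    (h3 : ∃ t, HasBlockSizes 1 2 (U 3) t ∧ Refines t (expSeq 1 (U 2))) :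
    ∃ T : ℕ → List ℕ, IsRegularTableau (Finset.Icc 1 n) T ∧
      restrictTab {1, 2, 3} T = U := by
  obtain ⟨s, hb1, hr1⟩ := h1
  obtain ⟨t, hb3, hr3⟩ := h3
  have hU2e : ∀ e ∈ U 2, e = 1 ∨ e = 3 := by
    intro e he
    have h := hU.1 2 (by simp) e he
    have h2 := h.1
    simp at h2
    rcases h2 with h2 | h2 | h2 <;> tauto
  obtain ⟨L, hL1, hL2, hL3⟩ := construct (U 2).length (U 2) (U 1) (U 3) s t
    le_rfl hU2e hb1 hr1 hb3 hr3
  refine ⟨phiTab n L, ⟨phiTab_isTableau L, ?_, ?_⟩, ?_⟩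
  · rw [Nat.card_Icc]; omega
  · -- regularity
    intro X Y hX hY hcX hcY
    obtain ⟨x, y, z, hxy, hyz, hXe⟩ := ord3 hcX
    obtain ⟨x', y', z', hxy', hyz', hYe⟩ := ord3 hcY
    have hx1 : 1 ≤ x := (Finset.mem_Icc.mp (hX (by rw [hXe]; simp))).1
    have hzn : z ≤ n := (Finset.mem_Icc.mp (hX (by rw [hXe]; simp))).2
    have hx1' : 1 ≤ x' := (Finset.mem_Icc.mp (hY (by rw [hYe]; simp))).1
    have hzn' : z' ≤ n := (Finset.mem_Icc.mp (hY (by rw [hYe]; simp))).2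
    have KX := phiTab_row (n := n) hxy hyz hx1 hzn L
    have KY := phiTab_row (n := n) hxy' hyz' hx1' hzn' L
    refine ⟨by rw [hXe, hYe, card3 hxy hyz, card3 hxy' hyz'], ?_⟩
    intro j hj
    rw [hXe, card3 hxy hyz] at hj
    have hj3 : j = 0 ∨ j = 1 ∨ j = 2 := by omega
    rw [hXe, hYe]
    rcases hj3 with hj0 | hj1 | hj2
    · subst hj0
      rw [restrict_row₀ hxy hyz, restrict_row₀ hxy' hyz', KX.1, KY.1]
    · subst hj1
      rw [restrict_row₁ hxy hyz, restrict_row₁ hxy' hyz', KX.2.1, KY.2.1]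
    · subst hj2
      rw [restrict_row₂ hxy hyz, restrict_row₂ hxy' hyz', KX.2.2, KY.2.2]
  · -- restriction equals U
    have K := phiTab_row (n := n) (show (1:ℕ) < 2 by omega) (show (2:ℕ) < 3 by omega)
      (le_refl 1) (show 3 ≤ n by omega) L
    have hid : ∀ (w : List ℕ),
        ∀ e ∈ w.filter (· ∈ ({1,2,3} : Finset ℕ)), rankIn {1,2,3} e = e := by
      intro w e he
      rw [List.mem_filter] at he
      have h2 := he.2
      simp at h2
      obtain ⟨q1, q2, q3⟩ := rank3 (show (1:ℕ) < 2 by omega) (show (2:ℕ) < 3 by omega)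
      rcases h2 with h | h | h <;> rw [h]
      · exact q1
      · exact q2
      · exact q3
    have hmapid : ∀ (w : List ℕ),
        (w.filter (· ∈ ({1,2,3} : Finset ℕ))).map (rankIn {1,2,3})
          = w.filter (· ∈ ({1,2,3} : Finset ℕ)) := by
      intro w
      rw [List.map_congr_left (fun e he => hid w e he)]
      exact List.map_id _
    funext i
    by_cases hi : i ∈ ({1, 2, 3} : Finset ℕ)
    · have hi' := hi
      simp at hi'
      rw [restrictTab, if_pos hi]
      rcases hi' with h | h | h <;> subst h
      · rw [← hmapid, K.1, hL1]
      · rw [← hmapid, K.2.1, hL2]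
      · rw [← hmapid, K.2.2, hL3]
    · rw [restrictTab, if_neg hi]
      exact (hU.2 i hi).symm

end RTaux


/-- **Proposition.** For `n ≥ 4` and a tableau `U` on `{1,2,3}`, there is a regular
tableau `T` on `[n]` with `T_{1,2,3} = U` iff rows `U 1` and `U 3` are balanced, the
block sizes of `U 1` refine the exponent sequence of `3` in `U 2`, and the block
sizes of `U 3` refine the exponent sequence of `1` in `U 2`. -/
theorem exists_regularTableau_iff (n : ℕ) (hn : 4 ≤ n) (U : ℕ → List ℕ)
    (hU : IsTableau ({1, 2, 3} : Finset ℕ) U) :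
    (∃ T : ℕ → List ℕ, IsRegularTableau (Finset.Icc 1 n) T ∧
        restrictTab {1, 2, 3} T = U) ↔
      (BalancedOn 2 3 (U 1) ∧ BalancedOn 1 2 (U 3) ∧
       (∃ s : List ℕ, HasBlockSizes 2 3 (U 1) s ∧ Refines s (expSeq 3 (U 2))) ∧
       (∃ s : List ℕ, HasBlockSizes 1 2 (U 3) s ∧ Refines s (expSeq 1 (U 2)))) := by
  constructor
  · rintro ⟨T, hT, hres⟩
    exact RTaux.forward hn T U hU hT hres
  · rintro ⟨hb1, hb3, h1, h3⟩
    exact RTaux.backward hn U hU h1 h3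

end
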